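/- arXiv:2305.01354 — 5 statements merged into one kernel-verified Lean document; each statement's English description precedes it below -/
import Mathlib

section
/- (Liouville property) Let b be a weight function such that (b,0) is a locally finite, connected graph over X, and let G be a nilpotent group acting cocompactly on X such that H_{b,0} is G-invariant. Then every bounded harmonic function f : X → ℝ is constant. -/
open MeasureTheory
open scoped BigOperators

noncomputable section

namespace GraphPaper

variable {X : Type*}

/-- The Schrödinger operator `H_{b,c}` of a graph `(b,c)` over `X`. -/
def schrodinger (b : X → X → ℝ) (c : X → ℝ) (f : X → ℝ) : X → ℝ :=
  fun x => (∑' y, b x y * (f x - f y)) + c x * f x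

/-- Membership of `f` in the domain of `H_{b,c}`. -/
def InDom (b : X → X → ℝ) (f : X → ℝ) : Prop :=
  ∀ x, Summable fun y => b x y * |f y|

/-- The graph `b` is connected: any two points are joined by a path of positive weights. -/
def Connected (b : X → X → ℝ) : Prop :=
  ∀ x y : X, Relation.ReflTransGen (fun u v => 0 < b u v) x y

/-- The degree `deg(x) = ∑_y b(x,y) + c(x)`. -/
def deg (b : X → X → ℝ) (c : X → ℝ) (x : X) : ℝ :=
  (∑' y, b x y) + c x

variable {G : Type*} [Group G] [MulAction G X]

/-- The shift `T_g f (x) = f (g⁻¹ x)`. -/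
def shift (g : G) (f : X → ℝ) : X → ℝ := fun x => f (g⁻¹ • x)

/-- `H_{b,c}` is invariant under the shifts by elements of a set `R ⊆ G`. -/
def HInvOn (b : X → X → ℝ) (c : X → ℝ) (R : Set G) : Prop :=
  ∀ g ∈ R, ∀ f : X → ℝ, InDom b f →
    InDom b (shift g f) ∧ schrodinger b c (shift g f) = shift g (schrodinger b c f)

/-- The action of `G` on `X` is cocompact: there is a finite `V` with `G V = X`. -/
def CocompactAction (G X : Type*) [Group G] [MulAction G X] : Prop :=
  ∃ V : Finset X, ∀ x : X, ∃ g : G, ∃ v ∈ V, x = g • v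

/-- The set `𝓗⁺` of nonnegative, not identically zero, harmonic functions. -/
def Hplus (b : X → X → ℝ) (c : X → ℝ) : Set (X → ℝ) :=
  {f | InDom b f ∧ schrodinger b c f = 0 ∧ (∀ x, 0 ≤ f x) ∧ f ≠ 0}

/-- The set `𝓚`: the closure of the normalized positive harmonic functions. -/
def Kset (b : X → X → ℝ) (c : X → ℝ) (x₀ : X) : Set (X → ℝ) :=
  closure {f : X → ℝ | f ∈ Hplus b c ∧ f x₀ = 1}

/-- The set `𝓚^R` of `R`-invariant elements of `𝓚`. -/
def KsetR (b : X → X → ℝ) (c : X → ℝ) (x₀ : X) (R : Set G) : Set (X → ℝ) :=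
  {f ∈ Kset b c x₀ | ∀ g ∈ R, shift g f = f}

/-- `f` is `G`-multiplicative with a character `γ ∈ Hom(G, ℝ_{>0})`. -/
def IsMultiplicative (G : Type*) [Group G] [MulAction G X] (f : X → ℝ) : Prop :=
  ∃ γ : G →* ℝ, (∀ g, 0 < γ g) ∧ ∀ g : G, shift g f = γ g⁻¹ • f

/-- `Q(R) = π⁻¹(Z(G/R))`, the preimage of the centre of `G/R`. -/
def Qsub (R : Subgroup G) [R.Normal] : Subgroup G :=
  (Subgroup.center (G ⧸ R)).comap (QuotientGroup.mk' R)

/-- The set `𝓜` of multiplicative elements of `𝓚`. -/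
def Mset (G : Type*) [Group G] [MulAction G X] (b : X → X → ℝ) (c : X → ℝ) (x₀ : X) :
    Set (X → ℝ) :=
  {f ∈ Kset b c x₀ | IsMultiplicative G f}

/-- The set `𝓚_λ` for the graph `(b, c - λ)`, i.e. for `λ`-harmonic functions. -/
def KsetLam (b : X → X → ℝ) (c : X → ℝ) (x₀ : X) (l : ℝ) : Set (X → ℝ) :=
  closure {f : X → ℝ | InDom b f ∧ (schrodinger b c f = fun x => l * f x) ∧
    (∀ x, 0 ≤ f x) ∧ f ≠ 0 ∧ f x₀ = 1}

/-- The set `𝓜_λ` of multiplicative elements of `𝓚_λ`. -/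
def MsetLam (G : Type*) [Group G] [MulAction G X] (b : X → X → ℝ) (c : X → ℝ) (x₀ : X)
    (l : ℝ) : Set (X → ℝ) :=
  {f ∈ KsetLam b c x₀ l | IsMultiplicative G f}


section LiouvilleHelpers

variable {X : Type*} {G : Type*} [Group G] [MulAction G X]

private lemma bzero {b : X → X → ℝ} (hb0 : ∀ x y, 0 ≤ b x y)
    {x y : X} (h : ¬ 0 < b x y) : b x y = 0 :=
  le_antisymm (not_lt.mp h) (hb0 x y)

lemma indom_auto (b : X → X → ℝ) (hb0 : ∀ x y, 0 ≤ b x y)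
    (hlf : ∀ x : X, {y | 0 < b x y}.Finite) (f : X → ℝ) : InDom b f := by
  intro x
  apply summable_of_ne_finset_zero (s := (hlf x).toFinset)
  intro y hy
  rw [bzero hb0 (by simpa using hy), zero_mul]

lemma schrodinger_eq_finsum (b : X → X → ℝ) (hb0 : ∀ x y, 0 ≤ b x y)
    (hlf : ∀ x : X, {y | 0 < b x y}.Finite) (f : X → ℝ) (x : X) :
    schrodinger b (fun _ => (0:ℝ)) f x = ∑ y ∈ (hlf x).toFinset, b x y * (f x - f y) := by
  simp only [schrodinger, zero_mul, add_zero]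
  exact tsum_eq_sum (fun y hy => by rw [bzero hb0 (by simpa using hy), zero_mul])

lemma schrodinger_zero_iff (b : X → X → ℝ) (hb0 : ∀ x y, 0 ≤ b x y)
    (hlf : ∀ x : X, {y | 0 < b x y}.Finite) (f : X → ℝ) :
    schrodinger b (fun _ => (0:ℝ)) f = 0 ↔
      ∀ x, ∑ y ∈ (hlf x).toFinset, b x y * (f x - f y) = 0 := by
  constructor
  · intro h x
    rw [← schrodinger_eq_finsum b hb0 hlf f x, h]
    rfl
  · intro h
    funext x
    rw [schrodinger_eq_finsum b hb0 hlf f x]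
    exact h x

lemma shift_harm (b : X → X → ℝ) (hb0 : ∀ x y, 0 ≤ b x y)
    (hlf : ∀ x : X, {y | 0 < b x y}.Finite)
    (hH : HInvOn b (fun _ => (0 : ℝ)) (Set.univ : Set G))
    (g : G) (f : X → ℝ) (hf : schrodinger b (fun _ => (0:ℝ)) f = 0) :
    schrodinger b (fun _ => (0:ℝ)) (shift g f) = 0 := by
  obtain ⟨-, h2⟩ := hH g (Set.mem_univ g) f (indom_auto b hb0 hlf f)
  rw [h2, hf]
  funext z
  rfl

lemma maxprinc (b : X → X → ℝ) (hb0 : ∀ x y, 0 ≤ b x y)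
    (hlf : ∀ x : X, {y | 0 < b x y}.Finite) (hconn : Connected b)
    (u : X → ℝ) (hu : ∀ x, ∑ y ∈ (hlf x).toFinset, b x y * (u x - u y) = 0)
    (s : ℝ) (hle : ∀ x, u x ≤ s) (v : X) (hv : u v = s) : ∀ x, u x = s := by
  intro x
  induction hconn v x with
  | refl => exact hv
  | @tail p q hpath hedge ih =>
    have hnn : ∀ y ∈ (hlf p).toFinset, 0 ≤ b p y * (u p - u y) :=
      fun y _ => mul_nonneg (hb0 p y) (by rw [ih]; linarith [hle y])
    have hall := (Finset.sum_eq_zero_iff_of_nonneg hnn).mp (hu p)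
    have hq : q ∈ (hlf p).toFinset := (Set.Finite.mem_toFinset _).mpr hedge
    have := hall q hq
    have hb : b p q ≠ 0 := ne_of_gt hedge
    have : u p - u q = 0 := by
      rcases mul_eq_zero.mp this with h | h
      · exact absurd h hb
      · exact h
    rw [← ih]
    linarith

lemma keyA [Countable X] [Nonempty X]
    (b : X → X → ℝ) (hb0 : ∀ x y, 0 ≤ b x y)
    (hlf : ∀ x : X, {y | 0 < b x y}.Finite) (hconn : Connected b)
    (hcocpt : CocompactAction G X)
    (hH : HInvOn b (fun _ => (0 : ℝ)) (Set.univ : Set G))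
    (f : X → ℝ) (C : ℝ) (hC : ∀ x, |f x| ≤ C)
    (hharm : schrodinger b (fun _ => (0:ℝ)) f = 0)
    (g : G) (hcomm : ∀ (a : G) (x : X), f (g⁻¹ • (a • x)) = f (a • (g⁻¹ • x))) :
    ∀ x : X, f x ≤ f (g⁻¹ • x) := by
  set F : X → ℝ := fun x => f x - f (g⁻¹ • x) with hF
  have hbdd : BddAbove (Set.range F) := by
    refine ⟨2 * C, ?_⟩
    rintro _ ⟨z, rfl⟩
    have h1 := abs_le.mp (hC z)
    have h2 := abs_le.mp (hC (g⁻¹ • z))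
    simp only [hF]
    linarith
  have hne : (Set.range F).Nonempty := Set.range_nonempty F
  set s := sSup (Set.range F) with hs_def
  have hFs : ∀ z, F z ≤ s := fun z => le_csSup hbdd ⟨z, rfl⟩
  suffices hs : s ≤ 0 by
    intro z
    have := (hFs z).trans hs
    simp only [hF] at this
    linarith
  -- near-maximal points
  have hex : ∀ n : ℕ, ∃ z, s - 1/(n+1) < F z := by
    intro n
    obtain ⟨a, ⟨z, rfl⟩, ha⟩ := exists_lt_of_lt_csSup hne
      (show s - 1/(n+1) < s by
        have : (0:ℝ) < 1/(n+1) := by positivity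
        linarith)
    exact ⟨z, ha⟩
  choose xs hxs using hex
  obtain ⟨V, hV⟩ := hcocpt
  choose cg cv hcvV hxeq using fun n => hV (xs n)
  have : ∃ v₀ : X, v₀ ∈ V ∧ (Set.Infinite {n : ℕ | cv n = v₀}) := by
    obtain ⟨⟨v₀, hv₀⟩, hfib⟩ :=
      Finite.exists_infinite_fiber (fun n : ℕ => (⟨cv n, hcvV n⟩ : {y // y ∈ V}))
    refine ⟨v₀, hv₀, ?_⟩
    have := Set.infinite_coe_iff.mp hfib
    apply Set.Infinite.mono ?_ this
    intro n hn
    simpa [Subtype.ext_iff] using hn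
  obtain ⟨v₀, hv₀V, hinf⟩ := this
  -- arbitrarily near-maximal values on the orbit of v₀
  have hnear : ∀ m : ℕ, ∃ a : G, s - 1/(m+1) < F (a • v₀) := by
    intro m
    obtain ⟨n, hn, hmn⟩ := hinf.exists_gt m
    refine ⟨cg n, ?_⟩
    have hxv : xs n = cg n • v₀ := by rw [hxeq n, hn]
    have hle' : 1/((n:ℝ)+1) ≤ 1/((m:ℝ)+1) := by
      apply one_div_le_one_div_of_le (by positivity)
      have : (m:ℝ) ≤ n := by exact_mod_cast le_of_lt hmn
      linarith
    have := hxs n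
    rw [hxv] at this
    linarith
  choose as has using hnear
  -- the sequence of shifted functions
  set h : ℕ → X → ℝ := fun n x => f (as n • x) with hh
  have hshift : ∀ n, h n = shift ((as n)⁻¹) f := by
    intro n; funext z; simp [hh, shift]
  have hharm_n : ∀ n x, ∑ y ∈ (hlf x).toFinset, b x y * (h n x - h n y) = 0 := by
    intro n
    rw [hshift n]
    exact (schrodinger_zero_iff b hb0 hlf _).mp
      (shift_harm b hb0 hlf hH _ f hharm)
  -- compactness
  set K : Set (X → ℝ) := Set.pi Set.univ (fun _ => Set.Icc (-C) C) with hK_def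
  have hK : IsCompact K := isCompact_univ_pi (fun _ => isCompact_Icc)
  have hmem : ∀ n, h n ∈ K := by
    intro n z _
    exact abs_le.mp (hC (as n • z))
  obtain ⟨ht, htK, φ, hφ, htend⟩ := hK.tendsto_subseq hmem
  have hptw : ∀ z, Filter.Tendsto (fun n => h (φ n) z) Filter.atTop (nhds (ht z)) := by
    intro z
    exact tendsto_pi_nhds.mp htend z
  -- the limit is harmonic
  have hharm_t : ∀ x, ∑ y ∈ (hlf x).toFinset, b x y * (ht x - ht y) = 0 := by
    intro x
    have h1 : Filter.Tendsto
        (fun n => ∑ y ∈ (hlf x).toFinset, b x y * (h (φ n) x - h (φ n) y))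
        Filter.atTop (nhds (∑ y ∈ (hlf x).toFinset, b x y * (ht x - ht y))) := by
      apply tendsto_finset_sum
      intro y _
      exact ((hptw x).sub (hptw y)).const_mul _
    simp only [hharm_n] at h1
    exact tendsto_nhds_unique h1 tendsto_const_nhds
  -- the limit difference function
  set Ft : X → ℝ := fun x => ht x - ht (g⁻¹ • x) with hFt
  have hrel : ∀ n z, h n z - h n (g⁻¹ • z) = F (as n • z) := by
    intro n z
    simp only [hh, hF]
    rw [hcomm (as n) z]
  have hFtptw : ∀ z, Filter.Tendsto (fun n => F (as (φ n) • z)) Filter.atTop (nhds (Ft z)) := by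
    intro z
    have := (hptw z).sub (hptw (g⁻¹ • z))
    simpa only [hrel] using this
  have hFt_le : ∀ z, Ft z ≤ s := by
    intro z
    exact le_of_tendsto (hFtptw z) (Filter.Eventually.of_forall fun n => hFs _)
  have hFt_v : Ft v₀ = s := by
    have hlow : Filter.Tendsto (fun n : ℕ => s - 1/((φ n : ℝ)+1)) Filter.atTop (nhds s) := by
      have h0 : Filter.Tendsto (fun n : ℕ => 1/((n:ℝ)+1)) Filter.atTop (nhds 0) :=
        tendsto_one_div_add_atTop_nhds_zero_nat
      have := (h0.comp hφ.tendsto_atTop).const_sub s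
      simpa using this
    have hsq := tendsto_of_tendsto_of_tendsto_of_le_of_le hlow tendsto_const_nhds
      (f := fun n => F (as (φ n) • v₀))
      (fun n => le_of_lt (has (φ n))) (fun n => hFs _)
    exact tendsto_nhds_unique (hFtptw v₀) hsq
  -- Ft is harmonic
  have hFt_harm : ∀ x, ∑ y ∈ (hlf x).toFinset, b x y * (Ft x - Ft y) = 0 := by
    have hts : schrodinger b (fun _ => (0:ℝ)) ht = 0 :=
      (schrodinger_zero_iff b hb0 hlf ht).mpr hharm_t
    have h2 := (schrodinger_zero_iff b hb0 hlf (shift g ht)).mp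
      (shift_harm b hb0 hlf hH g ht hts)
    intro x
    have e : ∀ y ∈ (hlf x).toFinset, b x y * (Ft x - Ft y)
        = b x y * (ht x - ht y) - b x y * (shift g ht x - shift g ht y) := by
      intro y _
      simp only [hFt, shift]
      ring
    rw [Finset.sum_congr rfl e, Finset.sum_sub_distrib, hharm_t x, h2 x, sub_zero]
  -- maximum principle
  have hconst := maxprinc b hb0 hlf hconn Ft hFt_harm s hFt_le v₀ hFt_v
  -- iterate the shift relation
  have hiter : ∀ (k : ℕ) (z : X), ht z - ht ((g⁻¹)^k • z) = k * s := by
    intro k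
    induction k with
    | zero => intro z; simp
    | succ k ih =>
      intro z
      have e1 : (g⁻¹)^(k+1) • z = (g⁻¹)^k • (g⁻¹ • z) := by
        rw [← mul_smul, ← pow_succ]
      have h1 := hconst z
      have h2 := ih (g⁻¹ • z)
      simp only [hFt] at h1
      rw [e1]
      push_cast
      linarith
  have hbd : ∀ z, |ht z| ≤ C := by
    intro z
    have := htK z (Set.mem_univ z)
    exact abs_le.mpr this
  by_contra hpos
  push_neg at hpos
  obtain ⟨k, hk⟩ := exists_nat_gt ((2*C)/s)
  have h1 := hiter k v₀
  have h2 := abs_le.mp (hbd v₀)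
  have h3 := abs_le.mp (hbd ((g⁻¹)^k • v₀))
  have h4 : (k:ℝ) * s ≤ 2 * C := by linarith
  have h5 : 2 * C < (k:ℝ) * s := by
    rw [div_lt_iff₀ hpos] at hk
    linarith
  linarith

end LiouvilleHelpers

/-- **Liouville property.** Every bounded harmonic function for `H_{b,0}`
is constant. -/
theorem liouville {X : Type*} [Countable X] {G : Type*} [Group G]
    [MulAction G X] [Group.IsNilpotent G]
    (b : X → X → ℝ)
    (hb0 : ∀ x y, 0 ≤ b x y) (hbd : ∀ x, b x x = 0) (hbs : ∀ x, Summable (b x))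
    (hlf : ∀ x : X, {y | 0 < b x y}.Finite) (hconn : Connected b)
    (hcocpt : CocompactAction G X)
    (hH : HInvOn b (fun _ => (0 : ℝ)) (Set.univ : Set G))
    (f : X → ℝ) (hbound : ∃ C : ℝ, ∀ x, |f x| ≤ C)
    (hdom : InDom b f) (hharm : schrodinger b (fun _ => (0 : ℝ)) f = 0) :
    ∀ x y : X, f x = f y := by
  obtain ⟨C, hC⟩ := hbound
  intro x y
  haveI : Nonempty X := ⟨x⟩
  -- f is invariant under the whole upper central series
  have hinv : ∀ (i : ℕ), ∀ g ∈ Subgroup.upperCentralSeries G i, ∀ z : X, f (g⁻¹ • z) = f z := by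
    intro i
    induction i with
    | zero =>
      intro g hg z
      rw [upperCentralSeries_zero] at hg
      rw [Subgroup.mem_bot.mp hg]
      simp
    | succ i ih =>
      intro g hg z
      have hNinv : ∀ n ∈ upperCentralSeries G i, ∀ z : X, f (n • z) = f z := by
        intro n hn z
        have := ih n⁻¹ (inv_mem hn) z
        simpa using this
      have hcomm : ∀ g' ∈ Subgroup.upperCentralSeries G (i+1), ∀ (a : G) (z : X),
          f (g'⁻¹ • (a • z)) = f (a • (g'⁻¹ • z)) := by
        intro g' hg' a z
        have hd : g' * a⁻¹ * g'⁻¹ * a ∈ Subgroup.upperCentralSeries G i := by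
          have := (mem_upperCentralSeries_succ_iff.mp hg') a⁻¹
          simpa [commutatorElement_def] using this
        have hd' : (a * g'⁻¹) * (g' * a⁻¹ * g'⁻¹ * a) * (a * g'⁻¹)⁻¹ ∈ Subgroup.upperCentralSeries G i :=
          Subgroup.Normal.conj_mem (inferInstance : (Subgroup.upperCentralSeries G i).Normal) _ hd _
        have hid : g'⁻¹ * a
            = ((a * g'⁻¹) * (g' * a⁻¹ * g'⁻¹ * a) * (a * g'⁻¹)⁻¹) * (a * g'⁻¹) := by
          group
        calc f (g'⁻¹ • a • z) = f ((g'⁻¹ * a) • z) := by rw [mul_smul]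
          _ = f (((a * g'⁻¹) * (g' * a⁻¹ * g'⁻¹ * a) * (a * g'⁻¹)⁻¹) • ((a * g'⁻¹) • z)) := by
              rw [hid, mul_smul]
          _ = f ((a * g'⁻¹) • z) := hNinv _ hd' _
          _ = f (a • g'⁻¹ • z) := by rw [mul_smul]
      have h1 := keyA b hb0 hlf hconn hcocpt hH f C hC hharm g (hcomm g hg)
      have h2 := keyA b hb0 hlf hconn hcocpt hH f C hC hharm g⁻¹
        (by intro a w; simpa using hcomm g⁻¹ (inv_mem hg) a w)
      have h1' := h1 z
      have h2' := h2 (g⁻¹ • z)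
      simp only [inv_inv, smul_inv_smul] at h2'
      linarith
  obtain ⟨n, hn⟩ := Group.IsNilpotent.nilpotent G
  have hinvG : ∀ (g : G) (z : X), f (g • z) = f z := by
    intro g z
    have := hinv n g⁻¹ (hn ▸ Subgroup.mem_top g⁻¹) z
    simpa using this
  obtain ⟨V, hV⟩ := hcocpt
  have hneV : (V.image f).Nonempty := by
    obtain ⟨g, v, hv, -⟩ := hV x
    exact ⟨f v, Finset.mem_image_of_mem f hv⟩
  set M := (V.image f).max' hneV with hM
  have hle : ∀ z, f z ≤ M := by
    intro z
    obtain ⟨g, v, hv, rfl⟩ := hV z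
    rw [hinvG]
    exact Finset.le_max' _ _ (Finset.mem_image_of_mem f hv)
  obtain ⟨v₀, hv₀V, hv₀⟩ : ∃ v ∈ V, f v = M := by
    have := (V.image f).max'_mem hneV
    rwa [Finset.mem_image] at this
  have hfin := (schrodinger_zero_iff b hb0 hlf f).mp hharm
  have hcst := maxprinc b hb0 hlf hconn f hfin M hle v₀ hv₀
  rw [hcst x, hcst y]

end GraphPaper
end
end

section
/- Let (b,c) be a connected graph over X with a cocompact group action G, fix x₀ ∈ X, and let f₁, f₂ be strictly positive functions in the domain of H_{b,c} with f₁(x₀) = f₂(x₀) = 1, both G-multiplicative with the same character γ ∈ Hom(G, ℝ_{>0}). If f₁ is superharmonic and f₂ is subharmonic, then f₁ = f₂ and both are harmonic. -/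
open MeasureTheory
open scoped BigOperators

noncomputable section

namespace GraphPaper

variable {X : Type*}

variable {G : Type*} [Group G] [MulAction G X]

/-- Two positive normalized multiplicative functions with the same
character, one superharmonic and one subharmonic, coincide and are harmonic. -/
theorem superharmonic_eq_subharmonic {X : Type*} [Countable X] {G : Type*} [Group G]
    [MulAction G X]
    (b : X → X → ℝ) (c : X → ℝ)
    (hb0 : ∀ x y, 0 ≤ b x y) (hbd : ∀ x, b x x = 0) (hbs : ∀ x, Summable (b x))
    (hconn : Connected b) (hcocpt : CocompactAction G X) (x₀ : X)
    (f₁ f₂ : X → ℝ) (hdom₁ : InDom b f₁) (hdom₂ : InDom b f₂)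
    (hpos₁ : ∀ x, 0 < f₁ x) (hpos₂ : ∀ x, 0 < f₂ x)
    (hn₁ : f₁ x₀ = 1) (hn₂ : f₂ x₀ = 1)
    (γ : G →* ℝ) (hγ : ∀ g, 0 < γ g)
    (hm₁ : ∀ g : G, shift g f₁ = γ g⁻¹ • f₁) (hm₂ : ∀ g : G, shift g f₂ = γ g⁻¹ • f₂)
    (hsuper : ∀ x, 0 ≤ schrodinger b c f₁ x) (hsub : ∀ x, schrodinger b c f₂ x ≤ 0) :
    f₁ = f₂ ∧ schrodinger b c f₁ = 0 := by
  classical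
  -- basic summability facts
  have hsumF : ∀ (f : X → ℝ), InDom b f → ∀ x, Summable (fun y => b x y * f y) := by
    intro f hdom x
    apply Summable.of_abs
    have := hdom x
    convert this using 1
    · rfl
    funext y
    rw [abs_mul, abs_of_nonneg (hb0 x y)]
  have hsumf : ∀ (f : X → ℝ), InDom b f → ∀ x,
      Summable (fun y => b x y * (f x - f y)) := by
    intro f hdom x
    have h1 : Summable (fun y => b x y * f x) := (hbs x).mul_right (f x)
    have h2 := hsumF f hdom x
    simpa [mul_sub] using h1.sub h2
  -- multiplicativity pointwise
  have hmul₁ : ∀ (g : G) (v : X), f₁ (g • v) = γ g * f₁ v := by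
    intro g v
    have := congrFun (hm₁ g⁻¹) v
    simpa [shift] using this
  have hmul₂ : ∀ (g : G) (v : X), f₂ (g • v) = γ g * f₂ v := by
    intro g v
    have := congrFun (hm₂ g⁻¹) v
    simpa [shift] using this
  -- the fundamental set
  obtain ⟨V, hV⟩ := hcocpt
  obtain ⟨g₀, v₀, hv₀V, hx₀⟩ := hV x₀
  have hVne : V.Nonempty := ⟨v₀, hv₀V⟩
  set W : Finset ℝ := V.image (fun v => f₂ v / f₁ v) with hW
  have hWne : W.Nonempty := hVne.image _
  set M : ℝ := W.max' hWne with hM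
  -- the ratio f₂/f₁ is G-invariant, hence bounded by M
  have hratio : ∀ x : X, f₂ x / f₁ x ≤ M := by
    intro x
    obtain ⟨g, v, hvV, hx⟩ := hV x
    have : f₂ x / f₁ x = f₂ v / f₁ v := by
      rw [hx, hmul₁, hmul₂]
      rw [mul_div_mul_left _ _ (ne_of_gt (hγ g))]
    rw [this]
    exact W.le_max' _ (Finset.mem_image_of_mem _ hvV)
  have hMpos : 0 < M := lt_of_lt_of_le (div_pos (hpos₂ v₀) (hpos₁ v₀))
    (W.le_max' _ (Finset.mem_image_of_mem _ hv₀V))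
  -- h := M f₁ - f₂ is nonnegative
  set h : X → ℝ := fun x => M * f₁ x - f₂ x with hh
  have hnn : ∀ x, 0 ≤ h x := by
    intro x
    have := hratio x
    have h1 := hpos₁ x
    have : f₂ x ≤ M * f₁ x := by
      rw [div_le_iff₀ h1] at this; linarith
    simp only [hh]; linarith
  -- h vanishes at the maximizer
  obtain ⟨vs, hvsV, hvs⟩ := Finset.mem_image.mp (W.max'_mem hWne)
  have hvs0 : h vs = 0 := by
    have h1 := hpos₁ vs
    have : M * f₁ vs = f₂ vs := by
      rw [← hM, div_eq_iff (ne_of_gt h1)] at hvs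
      linarith
    simp only [hh]; linarith
  -- summability for h
  have hsumh : ∀ x, Summable (fun y => b x y * h y) := by
    intro x
    have h1 := (hsumF f₁ hdom₁ x).mul_left M
    have h2 := hsumF f₂ hdom₂ x
    have := h1.sub h2
    convert this using 1
    · rfl
    funext y
    simp only [hh]; ring
  -- key propagation of zeros
  have hkey : ∀ x, h x = 0 → ∀ y, 0 < b x y → h y = 0 := by
    intro x hx y hby
    have hS1 := hsumf f₁ hdom₁ x
    have hS2 := hsumf f₂ hdom₂ x
    have hexp : M * schrodinger b c f₁ x - schrodinger b c f₂ x
        = -(∑' y, b x y * h y) := by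
      simp only [schrodinger]
      have e1 : M * ((∑' y, b x y * (f₁ x - f₁ y)) + c x * f₁ x)
          - ((∑' y, b x y * (f₂ x - f₂ y)) + c x * f₂ x)
          = ((∑' y, M * (b x y * (f₁ x - f₁ y))) - ∑' y, b x y * (f₂ x - f₂ y))
            + c x * h x := by
        rw [tsum_mul_left]
        simp only [hh]; ring
      rw [e1, ← Summable.tsum_sub (hS1.mul_left M) hS2, hx, mul_zero, add_zero]
      rw [← tsum_neg]
      congr 1
      funext z
      have hxz : h x = 0 := hx
      simp only [hh] at hxz ⊢
      linear_combination b x z * hxz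
    have hpos : 0 ≤ M * schrodinger b c f₁ x - schrodinger b c f₂ x := by
      have h1 := hsuper x
      have h2 := hsub x
      nlinarith
    have hle : (∑' y, b x y * h y) ≤ 0 := by linarith [hexp ▸ hpos]
    have hterm : b x y * h y ≤ ∑' z, b x z * h z :=
      Summable.le_tsum (hsumh x) y (fun z _ => mul_nonneg (hb0 x z) (hnn z))
    have : b x y * h y = 0 :=
      le_antisymm (hterm.trans hle) (mul_nonneg (hb0 x y) (hnn y))
    exact (mul_eq_zero.mp this).resolve_left (ne_of_gt hby) |>.symm ▸ rfl
  -- connectivity: h ≡ 0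
  have hzero : ∀ y, h y = 0 := by
    intro y
    have := hconn vs y
    induction this with
    | refl => exact hvs0
    | tail _ hb ih => exact hkey _ ih _ hb
  -- conclude M = 1 and f₁ = f₂
  have hx₀z := hzero x₀
  simp only [hh, hn₁, hn₂, mul_one] at hx₀z
  have hM1 : M = 1 := by linarith
  have hfeq : f₁ = f₂ := by
    funext x
    have := hzero x
    simp only [hh, hM1, one_mul] at this
    linarith
  refine ⟨hfeq, ?_⟩
  funext x
  have h1 := hsuper x
  have h2 := hsub x
  rw [← hfeq] at h2
  simp only [Pi.zero_apply]
  linarith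

end GraphPaper
end
end

section
/- Let (b,c) be a locally finite and connected graph over X with a cocompact group action G such that H_{b,c} is G-invariant, and fix x₀ ∈ X. Then 𝓜 = ex (closure of the convex hull of 𝓜), where the closure is taken in the product topology on ℝ^X. -/
open MeasureTheory
open scoped BigOperators

noncomputable section

namespace GraphPaper

variable {X : Type*}

variable {G : Type*} [Group G] [MulAction G X]

/-! ### Auxiliary material: Milman's theorem in a locally convex space -/

section Milman
open Set Topology
set_option linter.unusedSectionVars false
variable {E : Type*} [AddCommGroup E] [Module ℝ E] [TopologicalSpace E]
  [IsTopologicalAddGroup E] [ContinuousSMul ℝ E] [LocallyConvexSpace ℝ E] [T2Space E]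

/-- Convex hull of the union of two compact convex sets is compact. -/
theorem aux_isCompact_convexHull_union {s t : Set E} (hs : IsCompact s) (ht : IsCompact t)
    (hcs : Convex ℝ s) (hct : Convex ℝ t) : IsCompact (convexHull ℝ (s ∪ t)) := by
  rcases s.eq_empty_or_nonempty with rfl | hsne
  · simpa [hct.convexHull_eq] using ht
  rcases t.eq_empty_or_nonempty with rfl | htne
  · simpa [hcs.convexHull_eq] using hs
  have key : convexHull ℝ (s ∪ t)
      = (fun p : ℝ × E × E => p.1 • p.2.1 + (1 - p.1) • p.2.2) '' (Icc (0:ℝ) 1 ×ˢ s ×ˢ t) := by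
    apply Subset.antisymm
    · apply convexHull_min
      · rintro x (hx | hx)
        · obtain ⟨y, hy⟩ := htne
          exact ⟨(1, x, y), ⟨⟨zero_le_one, le_refl 1⟩, hx, hy⟩, by simp⟩
        · obtain ⟨y, hy⟩ := hsne
          exact ⟨(0, y, x), ⟨⟨le_refl 0, zero_le_one⟩, hy, hx⟩, by simp⟩
      · rintro p ⟨⟨a, x₁, y₁⟩, ⟨⟨ha0, ha1⟩, hx₁, hy₁⟩, rfl⟩
          q ⟨⟨d, x₂, y₂⟩, ⟨⟨hd0, hd1⟩, hx₂, hy₂⟩, rfl⟩ u v hu hv huv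
        simp only at hx₁ hy₁ hx₂ hy₂ ha0 ha1 hd0 hd1 ⊢
        set c : ℝ := u * a + v * d with hc
        have hc0 : 0 ≤ c := by positivity
        have hc1 : c ≤ 1 := by nlinarith
        rcases eq_or_lt_of_le hc0 with hc0' | hc0'
        · -- c = 0 : everything concentrates on t
          have hua : u * a = 0 := by nlinarith
          have hvd : v * d = 0 := by nlinarith
          refine ⟨(0, x₁, u • y₁ + v • y₂), ⟨⟨le_refl 0, zero_le_one⟩, hx₁,
            hct hy₁ hy₂ hu hv huv⟩, ?_⟩
          simp only
          match_scalars <;> linarith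
        rcases eq_or_lt_of_le hc1 with hc1' | hc1'
        · -- c = 1 : everything concentrates on s
          have hua : u * (1 - a) = 0 := by nlinarith
          have hvd : v * (1 - d) = 0 := by nlinarith
          refine ⟨(1, u • x₁ + v • x₂, y₁), ⟨⟨zero_le_one, le_refl 1⟩,
            hcs hx₁ hx₂ hu hv huv, hy₁⟩, ?_⟩
          simp only
          match_scalars <;> linarith
        · -- 0 < c < 1
          have hcne : c ≠ 0 := ne_of_gt hc0'
          have h1c : 0 < 1 - c := by linarith
          have hcne1 : (1 - c) ≠ 0 := ne_of_gt h1c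
          refine ⟨(c, (c⁻¹ * (u * a)) • x₁ + (c⁻¹ * (v * d)) • x₂,
              ((1-c)⁻¹ * (u * (1 - a))) • y₁ + ((1-c)⁻¹ * (v * (1 - d))) • y₂),
            ⟨⟨hc0, hc1⟩, ?_, ?_⟩, ?_⟩
          · refine hcs hx₁ hx₂ ?_ ?_ ?_
            · exact mul_nonneg (by positivity) (mul_nonneg hu ha0)
            · exact mul_nonneg (by positivity) (mul_nonneg hv hd0)
            · rw [← mul_add, ← hc, inv_mul_cancel₀ hcne]
          · refine hct hy₁ hy₂ ?_ ?_ ?_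
            · exact mul_nonneg (by positivity) (mul_nonneg hu (by linarith))
            · exact mul_nonneg (by positivity) (mul_nonneg hv (by linarith))
            · rw [← mul_add]
              have : u * (1 - a) + v * (1 - d) = 1 - c := by rw [hc]; ring_nf; linarith
              rw [this, inv_mul_cancel₀ hcne1]
          · simp only
            match_scalars <;> field_simp
    · rintro z ⟨⟨a, x, y⟩, ⟨⟨ha0, ha1⟩, hx, hy⟩, rfl⟩
      exact (convex_convexHull ℝ (s ∪ t)) (subset_convexHull ℝ _ (Or.inl hx))
        (subset_convexHull ℝ _ (Or.inr hy)) ha0 (by linarith) (by ring)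
  rw [key]
  apply IsCompact.image
  · exact (isCompact_Icc.prod (hs.prod ht))
  · fun_prop

theorem aux_isCompact_convexHull_finite_union {ι : Type*} (t : Finset ι) (K : ι → Set E)
    (hK : ∀ i ∈ t, IsCompact (K i) ∧ Convex ℝ (K i)) :
    IsCompact (convexHull ℝ (⋃ i ∈ t, K i)) := by
  classical
  induction t using Finset.induction with
  | empty => simp
  | @insert a u hnotmem ih =>
    have h1 : (⋃ i ∈ insert a u, K i) = K a ∪ ⋃ i ∈ u, K i := by
      rw [Finset.set_biUnion_insert]
    rw [h1, ← convexHull_convexHull_union_right]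
    exact aux_isCompact_convexHull_union (hK a (Finset.mem_insert_self a u)).1
      (ih fun i hi => hK i (Finset.mem_insert_of_mem hi))
      (hK a (Finset.mem_insert_self a u)).2 (convex_convexHull ℝ _)

/-- **Milman's theorem**: if the closed convex hull of a compact set is compact, then all its
extreme points lie in the original set. -/
theorem aux_milman {s : Set E} (hs : IsCompact s)
    (hC : IsCompact (closure (convexHull ℝ s))) :
    Set.extremePoints ℝ (closure (convexHull ℝ s)) ⊆ s := by
  classical
  set C := closure (convexHull ℝ s) with hCdef
  have hCconv : Convex ℝ C := (convex_convexHull ℝ s).closure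
  intro x hx
  by_contra hxs
  obtain ⟨V, hV, hVsep⟩ := compact_open_separated_add_right hs
    (isOpen_compl_singleton (x := x)) (fun p hp => fun (h : p = x) => hxs (h ▸ hp))
  obtain ⟨V₁, hV₁, hV₁closed, hV₁V⟩ := exists_mem_nhds_isClosed_subset hV
  obtain ⟨W, ⟨hWnhds, hWconv⟩, hWV₁⟩ :=
    (LocallyConvexSpace.convex_basis_zero ℝ E).mem_iff.mp hV₁
  set W' := interior W with hW'def
  have hW'nhds : ∀ p : E, (fun y => p + y) '' W' ∈ 𝓝 p := by
    intro p
    have hop : IsOpen ((fun y => p + y) '' W') :=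
      (Homeomorph.addLeft p).isOpenMap _ isOpen_interior
    exact hop.mem_nhds ⟨0, mem_interior_iff_mem_nhds.mpr hWnhds, add_zero p⟩
  obtain ⟨T, hTs, hTcover⟩ := hs.elim_nhds_subcover (fun p => (fun y => p + y) '' W')
    (fun p _ => hW'nhds p)
  set K : E → Set E := fun p => closure (convexHull ℝ (s ∩ (fun y => p + y) '' W')) with hKdef
  have hKC : ∀ p, K p ⊆ C := fun p =>
    closure_mono (convexHull_mono (Set.inter_subset_left))
  have hKconv : ∀ p, Convex ℝ (K p) := fun p => (convex_convexHull ℝ _).closure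
  have hKcompact : ∀ p, IsCompact (K p) :=
    fun p => hC.of_isClosed_subset isClosed_closure (hKC p)
  have hxK : ∀ p ∈ T, x ∉ K p := by
    intro p hp hxKp
    have h1 : K p ⊆ closure ((fun y => p + y) '' W) := by
      apply closure_mono
      apply convexHull_min
      · exact fun z hz => Set.image_mono interior_subset hz.2
      · exact (hWconv.translate p)
    have h2 : closure ((fun y => p + y) '' W) = (fun y => p + y) '' closure W :=
      ((Homeomorph.addLeft p).image_closure W).symm
    have h3 : closure W ⊆ V₁ := closure_minimal hWV₁ hV₁closed
    have h4 : x ∈ (fun y => p + y) '' V₁ := by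
      rw [h2] at h1
      exact Set.image_mono h3 (h1 hxKp)
    obtain ⟨w, hw, hwx⟩ := h4
    exact hVsep ⟨p, hTs p hp, w, hV₁V hw, hwx⟩ rfl
  set J := convexHull ℝ (⋃ p ∈ T, K p) with hJdef
  have hJcompact : IsCompact J :=
    aux_isCompact_convexHull_finite_union T K (fun p _ => ⟨hKcompact p, hKconv p⟩)
  have hsJ : s ⊆ J := by
    intro z hz
    obtain ⟨p, hpT, hzp⟩ := Set.mem_iUnion₂.mp (hTcover hz)
    refine subset_convexHull ℝ _ ?_
    exact Set.mem_biUnion hpT (subset_closure (subset_convexHull ℝ _ ⟨hz, hzp⟩))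
  have hCJ : C ⊆ J :=
    closure_minimal (convexHull_min hsJ (convex_convexHull ℝ _)) hJcompact.isClosed
  have hconvd : Convex ℝ (C \ {x}) := ((hCconv.mem_extremePoints_iff_convex_diff).1 hx).2
  have hJd : J ⊆ C \ {x} := by
    apply convexHull_min ?_ hconvd
    intro z hz
    obtain ⟨p, hpT, hzp⟩ := Set.mem_iUnion₂.mp hz
    exact ⟨hKC p hzp, fun h => hxK p hpT (h ▸ hzp)⟩
  exact (hJd (hCJ hx.1)).2 rfl

end Milman

/-! ### Auxiliary material: locally finite connected graphs -/

section GraphAux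
open Set Topology

variable {b : X → X → ℝ} {c : X → ℝ}

lemma aux_b_eq_zero (hb0 : ∀ x y, 0 ≤ b x y) (hlf : ∀ x : X, {y | 0 < b x y}.Finite)
    {x y : X} (hy : y ∉ (hlf x).toFinset) : b x y = 0 := by
  have : ¬ 0 < b x y := by simpa [Set.Finite.mem_toFinset] using hy
  exact le_antisymm (not_lt.mp this) (hb0 x y)

lemma aux_schrodinger_eq_sum (hb0 : ∀ x y, 0 ≤ b x y) (hlf : ∀ x : X, {y | 0 < b x y}.Finite)
    (f : X → ℝ) (x : X) :
    schrodinger b c f x = (∑ y ∈ (hlf x).toFinset, b x y * (f x - f y)) + c x * f x := by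
  unfold schrodinger
  congr 1
  exact tsum_eq_sum (fun y hy => by rw [aux_b_eq_zero hb0 hlf hy, zero_mul])

lemma aux_inDom_all (hb0 : ∀ x y, 0 ≤ b x y) (hlf : ∀ x : X, {y | 0 < b x y}.Finite)
    (f : X → ℝ) : InDom b f := by
  intro x
  exact summable_of_ne_finset_zero (s := (hlf x).toFinset)
    (fun y hy => by rw [aux_b_eq_zero hb0 hlf hy, zero_mul])

lemma aux_schrodinger_combo (hb0 : ∀ x y, 0 ≤ b x y) (hlf : ∀ x : X, {y | 0 < b x y}.Finite)
    (a a' : ℝ) (f g : X → ℝ) (z : X) :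
    schrodinger b c (fun x => a * f x + a' * g x) z
      = a * schrodinger b c f z + a' * schrodinger b c g z := by
  rw [aux_schrodinger_eq_sum hb0 hlf, aux_schrodinger_eq_sum hb0 hlf,
    aux_schrodinger_eq_sum hb0 hlf]
  rw [show (∑ y ∈ (hlf z).toFinset, b z y * ((a * f z + a' * g z) - (a * f y + a' * g y)))
      = ∑ y ∈ (hlf z).toFinset, (a * (b z y * (f z - f y)) + a' * (b z y * (g z - g y))) from
    Finset.sum_congr rfl (fun y _ => by ring)]
  rw [Finset.sum_add_distrib, ← Finset.mul_sum, ← Finset.mul_sum]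
  ring

/-- The closed convex "frame": nonnegative harmonic functions normalized at `x₀`. -/
def harmSet (b : X → X → ℝ) (c : X → ℝ) (x₀ : X) : Set (X → ℝ) :=
  {f | (∀ z, schrodinger b c f z = 0) ∧ (∀ z, 0 ≤ f z) ∧ f x₀ = 1}

lemma aux_harmSet_isClosed (hb0 : ∀ x y, 0 ≤ b x y) (hlf : ∀ x : X, {y | 0 < b x y}.Finite)
    (x₀ : X) : IsClosed (harmSet b c x₀) := by
  have h1 : harmSet b c x₀ =
      (⋂ z, {f : X → ℝ | schrodinger b c f z = 0}) ∩
      ((⋂ z, {f : X → ℝ | 0 ≤ f z}) ∩ {f : X → ℝ | f x₀ = 1}) := by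
    ext f; simp [harmSet, Set.mem_iInter]
  rw [h1]
  refine IsClosed.inter ?_ (IsClosed.inter ?_ ?_)
  · refine isClosed_iInter fun z => ?_
    have : {f : X → ℝ | schrodinger b c f z = 0}
        = {f : X → ℝ | (∑ y ∈ (hlf z).toFinset, b z y * (f z - f y)) + c z * f z = 0} := by
      ext f; simp [aux_schrodinger_eq_sum hb0 hlf]
    rw [this]
    apply isClosed_eq ?_ continuous_const
    exact (continuous_finset_sum _ fun y _ =>
      (continuous_const.mul ((continuous_apply z).sub (continuous_apply y)))).add
      (continuous_const.mul (continuous_apply z))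
  · exact isClosed_iInter fun z =>
      isClosed_le continuous_const (continuous_apply z)
  · exact isClosed_eq (continuous_apply x₀) continuous_const

lemma aux_harmSet_convex (hb0 : ∀ x y, 0 ≤ b x y) (hlf : ∀ x : X, {y | 0 < b x y}.Finite)
    (x₀ : X) : Convex ℝ (harmSet b c x₀) := by
  rintro f ⟨hf1, hf2, hf3⟩ g ⟨hg1, hg2, hg3⟩ a a' ha ha' haa
  have hfun : (a • f + a' • g) = fun x => a * f x + a' * g x := by
    funext x; simp [smul_eq_mul]
  refine ⟨?_, ?_, ?_⟩
  · intro z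
    rw [hfun, aux_schrodinger_combo hb0 hlf, hf1 z, hg1 z]; ring
  · intro z
    rw [hfun]
    have := hf2 z; have := hg2 z
    positivity
  · rw [hfun]; simp only []
    rw [hf3, hg3]; ring_nf; linarith

/-- Zero propagation: a nonnegative harmonic function vanishing at a point vanishes
everywhere (by connectedness). -/
lemma aux_harm_zero_spread (hb0 : ∀ x y, 0 ≤ b x y) (hlf : ∀ x : X, {y | 0 < b x y}.Finite)
    (hconn : Connected b) {f : X → ℝ} (hharm : ∀ z, schrodinger b c f z = 0)
    (hnn : ∀ z, 0 ≤ f z) {p : X} (hp : f p = 0) : ∀ x, f x = 0 := by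
  have step : ∀ y z : X, f y = 0 → 0 < b y z → f z = 0 := by
    intro y z hy hyz
    have h0 := hharm y
    rw [aux_schrodinger_eq_sum hb0 hlf, hy] at h0
    have h1 : ∑ w ∈ (hlf y).toFinset, b y w * f w = 0 := by
      have : ∑ w ∈ (hlf y).toFinset, b y w * (0 - f w)
          = -∑ w ∈ (hlf y).toFinset, b y w * f w := by
        rw [← Finset.sum_neg_distrib]
        exact Finset.sum_congr rfl (fun w _ => by ring)
      rw [this] at h0
      linarith
    have h2 := (Finset.sum_eq_zero_iff_of_nonneg
      (fun w _ => mul_nonneg (hb0 y w) (hnn w))).mp h1 z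
      (by simp [Set.Finite.mem_toFinset]; exact hyz)
    rcases mul_eq_zero.mp h2 with h | h
    · exact absurd h (ne_of_gt hyz)
    · exact h
  intro x
  induction hconn p x with
  | refl => exact hp
  | tail hab hbc ih => exact step _ _ ih hbc

lemma aux_harm_pos (hb0 : ∀ x y, 0 ≤ b x y) (hlf : ∀ x : X, {y | 0 < b x y}.Finite)
    (hconn : Connected b) {x₀ : X} {f : X → ℝ} (hf : f ∈ harmSet b c x₀) (x : X) :
    0 < f x := by
  rcases lt_or_eq_of_le (hf.2.1 x) with h | h
  · exact h
  · exfalso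
    have := aux_harm_zero_spread hb0 hlf hconn hf.1 hf.2.1 h.symm x₀
    rw [hf.2.2] at this
    exact one_ne_zero this

/-- Harnack-type bound, uniform over `harmSet`. -/
lemma aux_harnack_bound (hb0 : ∀ x y, 0 ≤ b x y) (hlf : ∀ x : X, {y | 0 < b x y}.Finite)
    (hconn : Connected b) (x₀ : X) :
    ∃ Cb : X → ℝ, ∀ x, 0 ≤ Cb x ∧ ∀ f ∈ harmSet b c x₀, f x ≤ Cb x := by
  have key : ∀ x, ∃ M : ℝ, 0 ≤ M ∧ ∀ f ∈ harmSet b c x₀, f x ≤ M := by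
    intro x
    induction hconn x₀ x with
    | refl => exact ⟨1, zero_le_one, fun f hf => le_of_eq hf.2.2⟩
    | tail hab hbc ih =>
      rename_i y z
      obtain ⟨M, hM0, hM⟩ := ih
      set d : ℝ := (∑ w ∈ (hlf y).toFinset, b y w) + c y with hd
      refine ⟨(max d 0 / b y z) * M, by positivity, ?_⟩
      intro f hf
      have h0 := hf.1 y
      rw [aux_schrodinger_eq_sum hb0 hlf] at h0
      have hsum : ∑ w ∈ (hlf y).toFinset, b y w * f w = d * f y := by
        have hexp : ∑ w ∈ (hlf y).toFinset, b y w * (f y - f w)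
            = (∑ w ∈ (hlf y).toFinset, b y w) * f y
              - ∑ w ∈ (hlf y).toFinset, b y w * f w := by
          rw [Finset.sum_mul, ← Finset.sum_sub_distrib]
          exact Finset.sum_congr rfl (fun w _ => by ring)
        rw [hexp] at h0
        rw [hd]; linarith
      have hzmem : z ∈ (hlf y).toFinset := by
        simp [Set.Finite.mem_toFinset]; exact hbc
      have h1 : b y z * f z ≤ d * f y := by
        rw [← hsum]
        exact Finset.single_le_sum (fun w _ => mul_nonneg (hb0 y w) (hf.2.1 w)) hzmem
      have h2 : b y z * f z ≤ max d 0 * f y :=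
        le_trans h1 (mul_le_mul_of_nonneg_right (le_max_left d 0) (hf.2.1 y))
      have h3 : f z ≤ (max d 0 / b y z) * f y := by
        rw [div_mul_eq_mul_div, le_div_iff₀ hbc]
        linarith [h2]
      calc f z ≤ (max d 0 / b y z) * f y := h3
        _ ≤ (max d 0 / b y z) * M :=
          mul_le_mul_of_nonneg_left (hM f hf) (by positivity)
  choose Cb hCb using key
  exact ⟨Cb, hCb⟩

end GraphAux

section GroupAux
open Set Topology

variable {b : X → X → ℝ} {c : X → ℝ}

lemma aux_jensen_sq {l1 l2 r1 r2 t : ℝ} (h1 : l1^2 ≤ r1) (h2 : l2^2 ≤ r2)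
    (ht : 0 ≤ t) (h1t : 0 ≤ 1 - t) :
    (t*l1 + (1-t)*l2)^2 ≤ t*r1 + (1-t)*r2 := by
  nlinarith [mul_nonneg (mul_nonneg ht h1t) (sq_nonneg (l1 - l2)),
    mul_le_mul_of_nonneg_left h1 ht, mul_le_mul_of_nonneg_left h2 h1t]

/-- The "multiplicative relation" set. -/
def Zset (G : Type*) [Group G] [MulAction G X] (x₀ : X) : Set (X → ℝ) :=
  {f | ∀ (g : G) (x : X), f (g • x) = f (g • x₀) * f x}

lemma aux_Zset_isClosed (x₀ : X) : IsClosed (Zset G x₀) := by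
  have h1 : Zset G x₀ = ⋂ (g : G), ⋂ (x : X),
      {f : X → ℝ | f (g • x) = f (g • x₀) * f x} := by
    ext f; simp [Zset, Set.mem_iInter]
  rw [h1]
  exact isClosed_iInter fun g => isClosed_iInter fun x =>
    isClosed_eq (continuous_apply (g • x))
      ((continuous_apply (g • x₀)).mul (continuous_apply x))

lemma aux_Kset_subset_harm (hb0 : ∀ x y, 0 ≤ b x y) (hlf : ∀ x : X, {y | 0 < b x y}.Finite)
    (x₀ : X) : Kset b c x₀ ⊆ harmSet b c x₀ := by
  refine closure_minimal ?_ (aux_harmSet_isClosed hb0 hlf x₀)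
  rintro f ⟨⟨hdom, hharm, hnn, hne⟩, hx₀⟩
  exact ⟨fun z => by rw [hharm]; rfl, hnn, hx₀⟩

lemma aux_Mset_eq (hb0 : ∀ x y, 0 ≤ b x y) (hlf : ∀ x : X, {y | 0 < b x y}.Finite)
    (hconn : Connected b) (x₀ : X) :
    Mset G b c x₀ = Kset b c x₀ ∩ Zset G x₀ := by
  ext f
  constructor
  · rintro ⟨hfK, γ, hγpos, hγ⟩
    refine ⟨hfK, ?_⟩
    have hfx₀ : f x₀ = 1 := (aux_Kset_subset_harm hb0 hlf x₀ hfK).2.2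
    have h1 : ∀ (g : G) (y : X), f (g • y) = γ g * f y := by
      intro g y
      have := congrFun (hγ g⁻¹) y
      simp only [shift, inv_inv, Pi.smul_apply, smul_eq_mul] at this
      exact this
    intro g x
    rw [h1 g x, h1 g x₀, hfx₀, mul_one]
  · rintro ⟨hfK, hfZ⟩
    have hfharm := aux_Kset_subset_harm hb0 hlf x₀ hfK
    refine ⟨hfK, ⟨⟨⟨fun g => f (g • x₀), ?_⟩, ?_⟩,
      fun g => aux_harm_pos hb0 hlf hconn hfharm _, ?_⟩⟩
    · show f ((1 : G) • x₀) = 1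
      rw [one_smul]
      exact hfharm.2.2
    · intro g h
      show f ((g * h) • x₀) = f (g • x₀) * f (h • x₀)
      rw [mul_smul]
      exact hfZ g (h • x₀)
    · intro g
      funext x
      show f (g⁻¹ • x) = f (g⁻¹ • x₀) * f x
      exact hfZ g⁻¹ x

/-- Uniqueness: two multiplicative elements of the frame agreeing on the orbit of `x₀`
are equal.  Uses cocompactness. -/
lemma aux_eq_of_eq_on_orbit (hb0 : ∀ x y, 0 ≤ b x y) (hlf : ∀ x : X, {y | 0 < b x y}.Finite)
    (hconn : Connected b) (hcocpt : CocompactAction G X) {x₀ : X} {f h : X → ℝ}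
    (hf : f ∈ harmSet b c x₀) (hh : h ∈ harmSet b c x₀)
    (hfZ : f ∈ Zset G x₀) (hhZ : h ∈ Zset G x₀)
    (horb : ∀ g : G, h (g • x₀) = f (g • x₀)) : h = f := by
  classical
  obtain ⟨V, hV⟩ := hcocpt
  have hVne : V.Nonempty := by
    obtain ⟨g, v, hv, -⟩ := hV x₀
    exact ⟨v, hv⟩
  have himgne : (V.image (fun v => h v / f v)).Nonempty := hVne.image _
  set m := (V.image (fun v => h v / f v)).min' himgne with hm
  obtain ⟨v₀, hv₀V, hv₀⟩ := Finset.mem_image.mp ((V.image (fun v => h v / f v)).min'_mem himgne)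
  have hmle : ∀ x, m * f x ≤ h x := by
    intro x
    obtain ⟨g, v, hvV, rfl⟩ := hV x
    have hfv : 0 < f v := aux_harm_pos hb0 hlf hconn hf v
    have hmlev : m ≤ h v / f v :=
      Finset.min'_le _ _ (Finset.mem_image_of_mem _ hvV)
    have h1 : m * f v ≤ h v := by
      rw [← div_mul_cancel₀ (h v) (ne_of_gt hfv)]
      exact mul_le_mul_of_nonneg_right hmlev (le_of_lt hfv)
    have hα : 0 ≤ f (g • x₀) := le_of_lt (aux_harm_pos hb0 hlf hconn hf _)
    rw [hfZ g v, hhZ g v, horb g]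
    calc m * (f (g • x₀) * f v) = f (g • x₀) * (m * f v) := by ring
      _ ≤ f (g • x₀) * h v := mul_le_mul_of_nonneg_left h1 hα
  set w : X → ℝ := fun x => 1 * h x + (-m) * f x with hw
  have hwharm : ∀ z, schrodinger b c w z = 0 := by
    intro z
    rw [hw, aux_schrodinger_combo hb0 hlf, hf.1 z, hh.1 z]
    ring
  have hwnn : ∀ z, 0 ≤ w z := by
    intro z
    have := hmle z
    simp only [hw, one_mul, neg_mul]
    linarith
  have hwv₀ : w v₀ = 0 := by
    have hfv₀ : 0 < f v₀ := aux_harm_pos hb0 hlf hconn hf v₀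
    have hval : h v₀ = m * f v₀ := (div_eq_iff (ne_of_gt hfv₀)).mp hv₀
    simp only [hw, one_mul, neg_mul, hval]
    ring
  have hwall := aux_harm_zero_spread hb0 hlf hconn hwharm hwnn hwv₀
  have hm1 : m = 1 := by
    have := hwall x₀
    simp only [hw, one_mul, neg_mul, hf.2.2, hh.2.2, mul_one] at this
    linarith
  funext x
  have := hwall x
  simp only [hw, one_mul, neg_mul, hm1] at this
  linarith

end GroupAux

set_option maxHeartbeats 1000000

/-- `𝓜 = ex (closure (convexHull 𝓜))`. -/
theorem Mset_eq_extremePoints_closure_convexHull {X : Type*} [Countable X] {G : Type*}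
    [Group G] [MulAction G X]
    (b : X → X → ℝ) (c : X → ℝ)
    (hb0 : ∀ x y, 0 ≤ b x y) (hbd : ∀ x, b x x = 0) (hbs : ∀ x, Summable (b x))
    (hlf : ∀ x : X, {y | 0 < b x y}.Finite) (hconn : Connected b)
    (hcocpt : CocompactAction G X)
    (hH : HInvOn b c (Set.univ : Set G)) (x₀ : X) :
    Mset G b c x₀ = Set.extremePoints ℝ (closure (convexHull ℝ (Mset G b c x₀))) := by
  classical
  obtain ⟨Cb, hCb⟩ := aux_harnack_bound (c := c) hb0 hlf hconn x₀
  have hKsub := aux_Kset_subset_harm (c := c) hb0 hlf x₀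
  have hMeq := aux_Mset_eq (G := G) (c := c) hb0 hlf hconn x₀
  have hMharm : Mset G b c x₀ ⊆ harmSet b c x₀ := by
    rw [hMeq]; exact fun f hf => hKsub hf.1
  have hboxc : IsCompact (Set.pi Set.univ (fun x : X => Set.Icc (0:ℝ) (Cb x))) :=
    isCompact_univ_pi (fun x => isCompact_Icc)
  have hharmbox : harmSet b c x₀ ⊆ Set.pi Set.univ (fun x : X => Set.Icc (0:ℝ) (Cb x)) := by
    intro f hf x _
    exact ⟨hf.2.1 x, (hCb x).2 f hf⟩
  have hCcharm : closure (convexHull ℝ (Mset G b c x₀)) ⊆ harmSet b c x₀ :=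
    closure_minimal (convexHull_min hMharm (aux_harmSet_convex hb0 hlf x₀))
      (aux_harmSet_isClosed hb0 hlf x₀)
  have hCccomp : IsCompact (closure (convexHull ℝ (Mset G b c x₀))) :=
    hboxc.of_isClosed_subset isClosed_closure (hCcharm.trans hharmbox)
  have hMclosed : IsClosed (Mset G b c x₀) := by
    rw [hMeq]; exact IsClosed.inter isClosed_closure (aux_Zset_isClosed x₀)
  have hMcomp : IsCompact (Mset G b c x₀) :=
    hboxc.of_isClosed_subset hMclosed (hMharm.trans hharmbox)
  apply Set.Subset.antisymm
  · -- 𝓜 ⊆ extreme points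
    intro f hf
    have hfZ : f ∈ Zset G x₀ := by rw [hMeq] at hf; exact hf.2
    have hfharm : f ∈ harmSet b c x₀ := hMharm hf
    rw [mem_extremePoints]
    refine ⟨subset_closure (subset_convexHull ℝ _ hf), ?_⟩
    intro u hu v hv hseg
    obtain ⟨a, a', ha, ha', haa, hcomb⟩ := hseg
    have hDg : ∀ g : G, closure (convexHull ℝ (Mset G b c x₀))
        ⊆ {w : X → ℝ | (w (g • x₀))^2 ≤ w (g • (g • x₀))} := by
      intro g
      refine closure_minimal (convexHull_min ?_ ?_) ?_
      · intro h hh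
        have hhZ : h ∈ Zset G x₀ := by rw [hMeq] at hh; exact hh.2
        simp only [Set.mem_setOf_eq]
        rw [hhZ g (g • x₀)]
        exact le_of_eq (pow_two _)
      · rintro w₁ h₁ w₂ h₂ t t' ht ht' htt
        simp only [Set.mem_setOf_eq, Pi.add_apply, Pi.smul_apply, smul_eq_mul] at h₁ h₂ ⊢
        have e : t' = 1 - t := by linarith
        have h1t : (0:ℝ) ≤ 1 - t := by linarith
        rw [e]
        exact aux_jensen_sq h₁ h₂ ht h1t
      · exact isClosed_le ((continuous_apply (g • x₀)).pow 2) (continuous_apply (g • (g • x₀)))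
    have hfq2 : ∀ g : G, f (g • (g • x₀)) = (f (g • x₀))^2 := by
      intro g; rw [hfZ g (g • x₀)]; exact (pow_two _).symm
    have stepA : ∀ g : G, u (g • x₀) = f (g • x₀) ∧ v (g • x₀) = f (g • x₀)
        ∧ u (g • (g • x₀)) = (f (g • x₀))^2 ∧ v (g • (g • x₀)) = (f (g • x₀))^2 := by
      intro g
      have hDu := hDg g hu
      have hDv := hDg g hv
      simp only [Set.mem_setOf_eq] at hDu hDv
      have h1 : f (g • x₀) = a * u (g • x₀) + a' * v (g • x₀) := by
        rw [← hcomb]; simp [smul_eq_mul]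
      have h2 : f (g • (g • x₀)) = a * u (g • (g • x₀)) + a' * v (g • (g • x₀)) := by
        rw [← hcomb]; simp [smul_eq_mul]
      have h3 := hfq2 g
      have e : a' = 1 - a := by linarith
      have h1a : (0:ℝ) < 1 - a := by linarith
      rw [e] at h1 h2
      have key : a * u (g • x₀)^2 + (1-a) * v (g • x₀)^2
          ≤ (a * u (g • x₀) + (1-a) * v (g • x₀))^2 := by
        calc a * u (g • x₀)^2 + (1-a) * v (g • x₀)^2
            ≤ a * u (g • g • x₀) + (1-a) * v (g • g • x₀) := by
              nlinarith [mul_le_mul_of_nonneg_left hDu ha.le,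
                mul_le_mul_of_nonneg_left hDv h1a.le]
          _ = f (g • g • x₀) := h2.symm
          _ = f (g • x₀)^2 := h3
          _ = (a * u (g • x₀) + (1-a) * v (g • x₀))^2 := by rw [h1]
      have h5 : (u (g • x₀) - v (g • x₀))^2 ≤ 0 := by
        nlinarith [key, mul_pos ha h1a]
      have h6 : (u (g • x₀) - v (g • x₀))^2 = 0 := le_antisymm h5 (sq_nonneg _)
      have hαβ : u (g • x₀) = v (g • x₀) := by
        have := pow_eq_zero_iff (two_ne_zero) |>.mp h6
        linarith
      have hvf : v (g • x₀) = f (g • x₀) := by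
        have h' : f (g • x₀) = v (g • x₀) := by rw [h1, hαβ]; ring
        exact h'.symm
      have huf : u (g • x₀) = f (g • x₀) := by rw [hαβ]; exact hvf
      have hDu' : (f (g • x₀))^2 ≤ u (g • (g • x₀)) := by rw [← huf]; exact hDu
      have hDv' : (f (g • x₀))^2 ≤ v (g • (g • x₀)) := by rw [← hvf]; exact hDv
      have hA : u (g • (g • x₀)) = (f (g • x₀))^2 := by
        refine le_antisymm ?_ hDu'
        nlinarith [mul_le_mul_of_nonneg_left hDv' h1a.le, h2, h3, ha]
      have hB : v (g • (g • x₀)) = (f (g • x₀))^2 := by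
        refine le_antisymm ?_ hDv'
        nlinarith [mul_le_mul_of_nonneg_left hDu' ha.le, h2, h3, h1a]
      exact ⟨huf, hvf, hA, hB⟩
    have stepB : ∀ w, w ∈ closure (convexHull ℝ (Mset G b c x₀)) →
        (∀ g : G, w (g • x₀) = f (g • x₀)) →
        (∀ g : G, w (g • (g • x₀)) = (f (g • x₀))^2) → w = f := by
      intro w hw hw1 hw2
      have hwharm : w ∈ harmSet b c x₀ := hCcharm hw
      have hwZ : w ∈ Zset G x₀ := by
        intro g x
        set q := f (g • x₀) with hq
        have hsub : closure (convexHull ℝ (Mset G b c x₀)) ⊆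
            {w' : X → ℝ | (w' (g • x) - q * w' x)^2
              ≤ (Cb x + 1)^2 * (w' (g • (g • x₀)) - 2*q* w' (g • x₀) + q^2 * w' x₀)} := by
          refine closure_minimal (convexHull_min ?_ ?_) ?_
          · intro h hh
            have hhZ : h ∈ Zset G x₀ := by rw [hMeq] at hh; exact hh.2
            have hhharm : h ∈ harmSet b c x₀ := hMharm hh
            simp only [Set.mem_setOf_eq]
            rw [hhZ g x, hhZ g (g • x₀), hhharm.2.2]
            have hhx0 : 0 ≤ h x := hhharm.2.1 x
            have hhxC : h x ≤ Cb x := (hCb x).2 h hhharm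
            have hCb0 : 0 ≤ Cb x := (hCb x).1
            have hsq : (h x)^2 ≤ (Cb x + 1)^2 := by nlinarith
            have e1 : (h (g • x₀) * h x - q * h x)^2 = (h (g • x₀) - q)^2 * (h x)^2 := by
              ring
            rw [e1]
            calc (h (g • x₀) - q)^2 * (h x)^2 ≤ (h (g • x₀) - q)^2 * (Cb x + 1)^2 :=
                mul_le_mul_of_nonneg_left hsq (sq_nonneg _)
              _ = (Cb x + 1)^2 * (h (g • x₀) * h (g • x₀) - 2*q*h (g • x₀) + q^2 * 1) := by
                ring
          · rintro w₁ h₁ w₂ h₂ t t' ht ht' htt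
            simp only [Set.mem_setOf_eq, Pi.add_apply, Pi.smul_apply, smul_eq_mul] at h₁ h₂ ⊢
            have e : t' = 1 - t := by linarith
            have h1t : (0:ℝ) ≤ 1 - t := by linarith
            rw [e]
            have key := aux_jensen_sq h₁ h₂ ht h1t
            calc (t * w₁ (g • x) + (1-t) * w₂ (g • x)
                    - q * (t * w₁ x + (1-t) * w₂ x))^2
                = (t * (w₁ (g • x) - q * w₁ x) + (1-t) * (w₂ (g • x) - q * w₂ x))^2 := by
                  ring
              _ ≤ t * ((Cb x + 1)^2 * (w₁ (g • (g • x₀)) - 2*q* w₁ (g • x₀) + q^2 * w₁ x₀))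
                  + (1-t) * ((Cb x + 1)^2
                      * (w₂ (g • (g • x₀)) - 2*q* w₂ (g • x₀) + q^2 * w₂ x₀)) := key
              _ = (Cb x + 1)^2 * ((t * w₁ (g • (g • x₀)) + (1-t) * w₂ (g • (g • x₀)))
                  - 2*q* (t * w₁ (g • x₀) + (1-t) * w₂ (g • x₀))
                  + q^2 * (t * w₁ x₀ + (1-t) * w₂ x₀)) := by ring
          · refine isClosed_le ?_ ?_
            · exact ((continuous_apply (g • x)).sub
                (continuous_const.mul (continuous_apply x))).pow 2
            · exact continuous_const.mul
                (((continuous_apply (g • (g • x₀))).sub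
                  (continuous_const.mul (continuous_apply (g • x₀)))).add
                  (continuous_const.mul (continuous_apply x₀)))
        have hwE := hsub hw
        simp only [Set.mem_setOf_eq] at hwE
        rw [hw2 g, hw1 g, hwharm.2.2] at hwE
        have h0 : (w (g • x) - q * w x)^2 ≤ 0 := by nlinarith [hwE]
        have h2 : (w (g • x) - q * w x)^2 = 0 := le_antisymm h0 (sq_nonneg _)
        have h3 : w (g • x) - q * w x = 0 := pow_eq_zero_iff (two_ne_zero) |>.mp h2
        have h4 : w (g • x) = q * w x := by linarith
        rw [h4, hw1 g]
      exact aux_eq_of_eq_on_orbit hb0 hlf hconn hcocpt hfharm hwharm hfZ hwZ hw1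
    constructor
    · exact stepB u hu (fun g => (stepA g).1) (fun g => (stepA g).2.2.1)
    · exact stepB v hv (fun g => (stepA g).2.1) (fun g => (stepA g).2.2.2)
  · -- extreme points ⊆ 𝓜, by Milman's theorem
    exact aux_milman hMcomp hCccomp

end GraphPaper
end
end

section
/- Let (b,c) be a locally finite connected graph over X with a nilpotent cocompact group action G such that H_{b,c} is G-invariant. Then there exists a normal subgroup R ⊆ G such that: every f ∈ 𝓗⁺_λ for every λ ∈ ℝ is R-invariant; R contains the stabiliser Stab(x) = {g ∈ G : gx = x} of every x ∈ X; and G/R is isomorphic to ℤ^d for some d ∈ ℕ₀. -/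
open MeasureTheory
open scoped BigOperators
open scoped commutatorElement

noncomputable section

namespace GraphPaper

variable {X : Type*}

variable {G : Type*} [Group G] [MulAction G X]

namespace Aux
open scoped Classical

variable {X : Type*} {G : Type*} [Group G] [MulAction G X]

theorem shift_shift (g h : G) (f : X → ℝ) : shift g (shift h f) = shift (g * h) f := by
  funext x; simp [shift, mul_smul, mul_inv_rev]

theorem shift_one (f : X → ℝ) : shift (1 : G) f = f := by
  funext x; simp [shift]

theorem shift_smul (g : G) (a : ℝ) (f : X → ℝ) : shift g (a • f) = a • shift g f := rfl

noncomputable def delta (y : X) : X → ℝ := fun z => if z = y then 1 else 0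

section BC
variable (b : X → X → ℝ) (c : X → ℝ)

/-- The finite set of neighbours. -/
noncomputable def nbr (hlf : ∀ x : X, {y | 0 < b x y}.Finite) (x : X) : Finset X :=
  (hlf x).toFinset

theorem mem_nbr {hlf : ∀ x : X, {y | 0 < b x y}.Finite} {x y : X} :
    y ∈ nbr b hlf x ↔ 0 < b x y := by simp [nbr]

theorem b_eq_zero (hb0 : ∀ x y, 0 ≤ b x y) {hlf : ∀ x : X, {y | 0 < b x y}.Finite}
    {x y : X} (hy : y ∉ nbr b hlf x) : b x y = 0 :=
  le_antisymm (not_lt.mp (fun h => hy (mem_nbr b |>.2 h))) (hb0 x y)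

theorem summable_mul (hb0 : ∀ x y, 0 ≤ b x y) (hlf : ∀ x : X, {y | 0 < b x y}.Finite)
    (x : X) (f : X → ℝ) : Summable (fun y => b x y * f y) := by
  apply summable_of_ne_finset_zero (s := nbr b hlf x)
  intro y hy
  rw [b_eq_zero b hb0 hy, zero_mul]

theorem inDom_all (hb0 : ∀ x y, 0 ≤ b x y) (hlf : ∀ x : X, {y | 0 < b x y}.Finite)
    (f : X → ℝ) : InDom b f := fun x => summable_mul b hb0 hlf x _

theorem tsum_nbr (hb0 : ∀ x y, 0 ≤ b x y) (hlf : ∀ x : X, {y | 0 < b x y}.Finite)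
    (x : X) (f : X → ℝ) :
    ∑' y, b x y * f y = ∑ y ∈ nbr b hlf x, b x y * f y := by
  apply tsum_eq_sum
  intro y hy
  rw [b_eq_zero b hb0 hy, zero_mul]

theorem schrodinger_eq_sum (hb0 : ∀ x y, 0 ≤ b x y) (hlf : ∀ x : X, {y | 0 < b x y}.Finite)
    (f : X → ℝ) (x : X) :
    schrodinger b c f x = (∑ y ∈ nbr b hlf x, b x y * (f x - f y)) + c x * f x := by
  unfold schrodinger
  congr 1
  apply tsum_eq_sum
  intro y hy
  rw [b_eq_zero b hb0 hy, zero_mul]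

theorem schrodinger_delta (hbd : ∀ x, b x x = 0) (hbs : ∀ x, Summable (b x)) (x y : X) :
    schrodinger b c (delta y) x = (if x = y then deg b c y else 0) - b x y := by
  have h1 : Summable (fun z => b x z * delta y x) := (hbs x).mul_right _
  have h2 : Summable (fun z => b x z * delta y z) := by
    apply summable_of_ne_finset_zero (s := {y})
    intro z hz
    simp only [Finset.mem_singleton] at hz
    simp [delta, hz]
  have key : (∑' z, b x z * (delta y x - delta y z))
      = (∑' z, b x z) * delta y x - b x y := by
    have : (fun z => b x z * (delta y x - delta y z))
        = fun z => b x z * delta y x - b x z * delta y z := by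
      funext z; ring
    rw [this, Summable.tsum_sub h1 h2, tsum_mul_right]
    congr 1
    rw [tsum_eq_single y]
    · simp [delta]
    · intro z hz; simp [delta, hz]
  unfold schrodinger
  rw [key]
  by_cases hxy : x = y
  · subst hxy
    have hd : delta x x = (1:ℝ) := by simp [delta]
    rw [if_pos rfl, hd, hbd x]
    unfold deg
    ring
  · simp [delta, hxy]

theorem shift_delta (g : G) (y : X) : shift g (delta y) = delta (g • y) := by
  funext z
  simp only [shift, delta]
  by_cases h : g⁻¹ • z = y
  · rw [if_pos h, if_pos (by rwa [← inv_smul_eq_iff ])]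
  · rw [if_neg h, if_neg (by rwa [inv_smul_eq_iff] at h)]

theorem b_inv (hb0 : ∀ x y, 0 ≤ b x y) (hbd : ∀ x, b x x = 0) (hbs : ∀ x, Summable (b x))
    (hlf : ∀ x : X, {y | 0 < b x y}.Finite) (hH : HInvOn b c (Set.univ : Set G)) :
    ∀ (g : G) (x y : X), b (g • x) (g • y) = b x y := by
  intro g x y
  have h := (hH g trivial (delta y) (inDom_all b hb0 hlf _)).2
  have h2 := congrFun h (g • x)
  rw [shift_delta] at h2
  rw [schrodinger_delta b c hbd hbs] at h2
  have h3 : shift g (schrodinger b c (delta y)) (g • x) = schrodinger b c (delta y) x := by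
    simp [shift]
  rw [h3, schrodinger_delta b c hbd hbs] at h2
  by_cases hxy : x = y
  · subst hxy
    rw [hbd, hbd]
  · rw [if_neg hxy, if_neg (fun hc => hxy (smul_left_cancel g hc))] at h2
    linarith

theorem row_inv (binv : ∀ (g : G) (x y : X), b (g • x) (g • y) = b x y) (g : G) (x : X) :
    ∑' z, b (g • x) z = ∑' z, b x z := by
  rw [← (MulAction.toPerm g).tsum_eq (b (g • x))]
  simp only [MulAction.toPerm_apply]
  exact tsum_congr fun z => binv g x z

theorem c_inv (hb0 : ∀ x y, 0 ≤ b x y) (hbd : ∀ x, b x x = 0) (hbs : ∀ x, Summable (b x))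
    (hlf : ∀ x : X, {y | 0 < b x y}.Finite) (hH : HInvOn b c (Set.univ : Set G)) :
    ∀ (g : G) (x : X), c (g • x) = c x := by
  intro g y
  have h := (hH g trivial (delta y) (inDom_all b hb0 hlf _)).2
  have h2 := congrFun h (g • y)
  rw [shift_delta] at h2
  rw [schrodinger_delta b c hbd hbs] at h2
  have h3 : shift g (schrodinger b c (delta y)) (g • y) = schrodinger b c (delta y) y := by
    simp [shift]
  rw [h3, schrodinger_delta b c hbd hbs] at h2
  rw [if_pos rfl, if_pos rfl] at h2
  have hb' : b (g • y) (g • y) = b y y := b_inv b c hb0 hbd hbs hlf hH g y y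
  have hdeg : deg b c (g • y) = deg b c y := by linarith
  have hrow := row_inv b (b_inv b c hb0 hbd hbs hlf hH) g y
  unfold deg at hdeg
  linarith

theorem schrodinger_shift (binv : ∀ (g : G) (x y : X), b (g • x) (g • y) = b x y)
    (cinv : ∀ (g : G) (x : X), c (g • x) = c x) (g : G) (f : X → ℝ) :
    schrodinger b c (shift g f) = shift g (schrodinger b c f) := by
  funext x
  show (∑' y, b x y * (f (g⁻¹ • x) - f (g⁻¹ • y))) + c x * f (g⁻¹ • x)
      = (∑' y, b (g⁻¹ • x) y * (f (g⁻¹ • x) - f y)) + c (g⁻¹ • x) * f (g⁻¹ • x)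
  have hc : c x = c (g⁻¹ • x) := by
    conv_lhs => rw [← smul_inv_smul g x, cinv g (g⁻¹ • x)]
  have ht : (∑' y, b x y * (f (g⁻¹ • x) - f (g⁻¹ • y)))
      = ∑' y, b (g⁻¹ • x) y * (f (g⁻¹ • x) - f y) := by
    rw [← (MulAction.toPerm g).tsum_eq (fun y => b x y * (f (g⁻¹ • x) - f (g⁻¹ • y)))]
    apply tsum_congr
    intro y
    simp only [MulAction.toPerm_apply, inv_smul_smul]
    congr 1
    conv_lhs => rw [← smul_inv_smul g x]
    exact binv g (g⁻¹ • x) y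
  rw [hc, ht]

/-- Directed paths of a given length. -/
def Steps : ℕ → X → X → Prop
  | 0, x, y => x = y
  | n+1, x, y => ∃ z, Steps n x z ∧ 0 < b z y

theorem steps_exists (hconn : Connected b) (x y : X) : ∃ n, Steps b n x y := by
  induction (hconn x y) with
  | refl => exact ⟨0, rfl⟩
  | tail _ hedge ih => exact ⟨ih.choose + 1, _, ih.choose_spec, hedge⟩

theorem steps_trans {m n : ℕ} {x y z : X} (h1 : Steps b m x y) (h2 : Steps b n y z) :
    Steps b (m + n) x z := by
  induction n generalizing z with
  | zero => exact h2 ▸ h1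
  | succ n ih =>
      obtain ⟨w, hw, he⟩ := h2
      exact ⟨w, ih hw, he⟩

theorem steps_smul (binv : ∀ (g : G) (x y : X), b (g • x) (g • y) = b x y)
    {n : ℕ} {x y : X} (g : G) (h : Steps b n x y) : Steps b n (g • x) (g • y) := by
  induction n generalizing y with
  | zero => rw [show x = y from h]; rfl
  | succ n ih =>
      obtain ⟨z, hz, he⟩ := h
      exact ⟨g • z, ih hz, by rwa [binv]⟩

end BC
end Aux
namespace Aux
variable {X : Type*} {G : Type*} [Group G] [MulAction G X]

section Cone
variable (b : X → X → ℝ) (c : X → ℝ) (l : ℝ)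

/-- `f` is a `l`-eigenfunction. -/
def Eig (f : X → ℝ) : Prop := ∀ x, schrodinger b c f x = l * f x

/-- `f` is a nonnegative `l`-eigenfunction. -/
def ConeM (f : X → ℝ) : Prop := (∀ x, 0 ≤ f x) ∧ Eig b c l f

theorem row_eq_sum (hb0 : ∀ x y, 0 ≤ b x y) (hlf : ∀ x : X, {y | 0 < b x y}.Finite) (x : X) :
    (∑' y, b x y) = ∑ y ∈ nbr b hlf x, b x y := by
  have := tsum_nbr b hb0 hlf x (fun _ => 1)
  simpa using this

theorem sum_eig (hb0 : ∀ x y, 0 ≤ b x y) (hlf : ∀ x : X, {y | 0 < b x y}.Finite)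
    {f : X → ℝ} (hf : Eig b c l f) (x : X) :
    ∑ y ∈ nbr b hlf x, b x y * f y = ((∑' y, b x y) + c x - l) * f x := by
  have h := hf x
  rw [schrodinger_eq_sum b c hb0 hlf] at h
  have hexp : ∑ y ∈ nbr b hlf x, b x y * (f x - f y)
      = (∑ y ∈ nbr b hlf x, b x y) * f x - ∑ y ∈ nbr b hlf x, b x y * f y := by
    rw [Finset.sum_mul, ← Finset.sum_sub_distrib]
    exact Finset.sum_congr rfl fun y _ => by ring
  rw [hexp] at h
  rw [row_eq_sum b hb0 hlf]
  linarith

/-- The Harnack edge constant. -/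
def kap (x w : X) : ℝ := max 0 (((∑' y, b x y) + c x - l) / b x w)

theorem edge_bound (hb0 : ∀ x y, 0 ≤ b x y) (hlf : ∀ x : X, {y | 0 < b x y}.Finite)
    {f : X → ℝ} (hc : ConeM b c l f) {x w : X} (hw : 0 < b x w) :
    f w ≤ kap b c l x w * f x := by
  have hkey : b x w * f w ≤ ((∑' y, b x y) + c x - l) * f x := by
    have single : b x w * f w ≤ ∑ y ∈ nbr b hlf x, b x y * f y :=
      Finset.single_le_sum (f := fun y => b x y * f y)
        (fun i _ => mul_nonneg (hb0 x i) (hc.1 i)) ((mem_nbr b).2 hw)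
    rw [sum_eig b c l hb0 hlf hc.2 x] at single
    exact single
  rcases (hc.1 x).eq_or_lt with h0 | hpos
  · have h1 : b x w * f w ≤ 0 := by rw [← h0] at hkey; simpa using hkey
    have h2 : f w ≤ 0 := nonpos_of_mul_nonpos_right ?_ hw
    · calc f w ≤ 0 := h2
        _ ≤ kap b c l x w * f x := mul_nonneg (le_max_left _ _) (hc.1 x)
    · linarith
  · have h1 : f w ≤ (((∑' y, b x y) + c x - l) / b x w) * f x := by
      rw [div_mul_eq_mul_div, le_div_iff₀ hw]
      linarith [hkey]
    calc f w ≤ _ := h1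
      _ ≤ kap b c l x w * f x :=
        mul_le_mul_of_nonneg_right (le_max_right _ _) (hc.1 x)

theorem exists_C (hb0 : ∀ x y, 0 ≤ b x y)
    (hlf : ∀ x : X, {y | 0 < b x y}.Finite)
    (binv : ∀ (g : G) (x y : X), b (g • x) (g • y) = b x y)
    (cinv : ∀ (g : G) (x : X), c (g • x) = c x)
    (V : Finset X) (hV : ∀ x : X, ∃ g : G, ∃ v ∈ V, x = g • v) :
    ∃ C : ℝ, 1 ≤ C ∧ ∀ x w : X, 0 < b x w → kap b c l x w ≤ C := by
  classical
  set K : Finset ℝ := V.biUnion (fun v => (nbr b hlf v).image (fun w => kap b c l v w)) with hK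
  refine ⟨(insert (1:ℝ) K).max' ⟨1, Finset.mem_insert_self _ _⟩,
    Finset.le_max' _ _ (Finset.mem_insert_self _ _), ?_⟩
  intro x w hw
  obtain ⟨g, v, hv, rfl⟩ := hV x
  have hb' : b (g • v) w = b v (g⁻¹ • w) := by
    conv_lhs => rw [← smul_inv_smul g w]
    exact binv g v (g⁻¹ • w)
  have hkinv : kap b c l (g • v) w = kap b c l v (g⁻¹ • w) := by
    unfold kap
    rw [row_inv b binv, cinv g v, hb']
  rw [hkinv]
  apply Finset.le_max'
  apply Finset.mem_insert_of_mem
  refine Finset.mem_biUnion.2 ⟨v, hv, Finset.mem_image.2 ⟨g⁻¹ • w, (mem_nbr b).2 ?_, rfl⟩⟩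
  rw [← hb']
  exact hw

theorem harnack (hb0 : ∀ x y, 0 ≤ b x y) (hlf : ∀ x : X, {y | 0 < b x y}.Finite)
    {C : ℝ} (hC1 : 1 ≤ C) (hC : ∀ x w : X, 0 < b x w → kap b c l x w ≤ C)
    {f : X → ℝ} (hc : ConeM b c l f) {n : ℕ} {x y : X} (h : Steps b n x y) :
    f y ≤ C ^ n * f x := by
  induction n generalizing y with
  | zero => rw [show x = y from h]; simpa using le_refl (f y)
  | succ n ih =>
      obtain ⟨z, hz, he⟩ := h
      calc f y ≤ kap b c l z y * f z := edge_bound b c l hb0 hlf hc he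
        _ ≤ C * f z := mul_le_mul_of_nonneg_right (hC z y he) (hc.1 z)
        _ ≤ C * (C ^ n * f x) :=
            mul_le_mul_of_nonneg_left (ih hz) (le_trans zero_le_one hC1)
        _ = C ^ (n + 1) * f x := by ring

theorem zero_prop (hb0 : ∀ x y, 0 ≤ b x y) (hlf : ∀ x : X, {y | 0 < b x y}.Finite)
    {f : X → ℝ} (hc : ConeM b c l f) {n : ℕ} {x y : X} (h : Steps b n x y)
    (h0 : f x = 0) : f y = 0 := by
  induction n generalizing y with
  | zero => rw [← show x = y from h]; exact h0
  | succ n ih =>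
      obtain ⟨z, hz, he⟩ := h
      have hz0 : f z = 0 := ih hz
      have hsum : ∑ y' ∈ nbr b hlf z, b z y' * f y' = 0 := by
        rw [sum_eig b c l hb0 hlf hc.2 z, hz0, mul_zero]
      have hterm : b z y * f y = 0 := by
        have := (Finset.sum_eq_zero_iff_of_nonneg
          (fun i _ => mul_nonneg (hb0 z i) (hc.1 i))).1 hsum y ((mem_nbr b).2 he)
        exact this
      rcases mul_eq_zero.1 hterm with h | h
      · exact absurd h (ne_of_gt he)
      · exact h

theorem cone_pos (hb0 : ∀ x y, 0 ≤ b x y) (hlf : ∀ x : X, {y | 0 < b x y}.Finite)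
    (hconn : Connected b) {f : X → ℝ} (hc : ConeM b c l f) (hne : f ≠ 0) (x : X) :
    0 < f x := by
  rcases (hc.1 x).eq_or_lt with h0 | hpos
  · exfalso
    apply hne
    funext z
    obtain ⟨n, hs⟩ := steps_exists b hconn x z
    exact zero_prop b c l hb0 hlf hc hs h0.symm
  · exact hpos

theorem schrodinger_smul (a : ℝ) (f : X → ℝ) (x : X) :
    schrodinger b c (a • f) x = a * schrodinger b c f x := by
  unfold schrodinger
  have h1 : (fun y => b x y * ((a • f) x - (a • f) y)) = fun y => a * (b x y * (f x - f y)) := by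
    funext y
    simp only [Pi.smul_apply, smul_eq_mul]
    ring
  rw [h1, tsum_mul_left]
  simp only [Pi.smul_apply, smul_eq_mul]
  ring

theorem schrodinger_add (hb0 : ∀ x y, 0 ≤ b x y) (hlf : ∀ x : X, {y | 0 < b x y}.Finite)
    (f g : X → ℝ) (x : X) :
    schrodinger b c (f + g) x = schrodinger b c f x + schrodinger b c g x := by
  rw [schrodinger_eq_sum b c hb0 hlf, schrodinger_eq_sum b c hb0 hlf,
    schrodinger_eq_sum b c hb0 hlf]
  have h1 : ∑ y ∈ nbr b hlf x, b x y * ((f + g) x - (f + g) y)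
      = ∑ y ∈ nbr b hlf x, (b x y * (f x - f y) + b x y * (g x - g y)) := by
    refine Finset.sum_congr rfl fun y _ => ?_
    simp only [Pi.add_apply]
    ring
  rw [h1, Finset.sum_add_distrib]
  simp only [Pi.add_apply]
  ring

theorem eig_smul {a : ℝ} {f : X → ℝ} (hf : Eig b c l f) : Eig b c l (a • f) := by
  intro x
  rw [schrodinger_smul, hf x]
  simp only [Pi.smul_apply, smul_eq_mul]
  ring

theorem eig_shift (binv : ∀ (g : G) (x y : X), b (g • x) (g • y) = b x y)
    (cinv : ∀ (g : G) (x : X), c (g • x) = c x) (g : G) {f : X → ℝ}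
    (hf : Eig b c l f) : Eig b c l (shift g f) := by
  intro x
  have h := congrFun (schrodinger_shift b c binv cinv g f) x
  rw [h]
  show schrodinger b c f (g⁻¹ • x) = l * f (g⁻¹ • x)
  exact hf _

end Cone
end Aux
namespace Aux
variable {X : Type*} {G : Type*} [Group G] [MulAction G X]

section Pset
variable (b : X → X → ℝ) (c : X → ℝ) (l : ℝ) (x₀ : X)

/-- The compact convex set of normalized nonnegative `l`-eigenfunctions. -/
def Pset : Set (X → ℝ) := {f | (∀ x, 0 ≤ f x) ∧ f x₀ = 1 ∧ Eig b c l f}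

theorem pset_coneM {f : X → ℝ} (hf : f ∈ Pset b c l x₀) : ConeM b c l f := ⟨hf.1, hf.2.2⟩

theorem pset_ne {f : X → ℝ} (hf : f ∈ Pset b c l x₀) : f ≠ 0 := by
  intro h0
  have := hf.2.1
  rw [h0] at this
  simp at this

theorem pset_pos (hb0 : ∀ x y, 0 ≤ b x y) (hlf : ∀ x : X, {y | 0 < b x y}.Finite)
    (hconn : Connected b) {f : X → ℝ} (hf : f ∈ Pset b c l x₀) (x : X) : 0 < f x :=
  cone_pos b c l hb0 hlf hconn (pset_coneM b c l x₀ hf) (pset_ne b c l x₀ hf) x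

theorem eig_lin (hb0 : ∀ x y, 0 ≤ b x y) (hlf : ∀ x : X, {y | 0 < b x y}.Finite)
    {f g : X → ℝ} (hf : Eig b c l f) (hg : Eig b c l g) (α β : ℝ) :
    Eig b c l (α • f + β • g) := by
  intro x
  rw [schrodinger_add b c hb0 hlf, schrodinger_smul, schrodinger_smul, hf x, hg x]
  simp only [Pi.add_apply, Pi.smul_apply, smul_eq_mul]
  ring

theorem pset_convex (hb0 : ∀ x y, 0 ≤ b x y) (hlf : ∀ x : X, {y | 0 < b x y}.Finite) :
    Convex ℝ (Pset b c l x₀) := by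
  intro f hf g hg a a' ha ha' haa
  refine ⟨fun x => ?_, ?_, eig_lin b c l hb0 hlf hf.2.2 hg.2.2 a a'⟩
  · exact add_nonneg (mul_nonneg ha (hf.1 x)) (mul_nonneg ha' (hg.1 x))
  · simp only [Pi.add_apply, Pi.smul_apply, smul_eq_mul, hf.2.1, hg.2.1]
    simpa using haa

theorem continuous_schrod_eval (hb0 : ∀ x y, 0 ≤ b x y)
    (hlf : ∀ x : X, {y | 0 < b x y}.Finite) (x : X) :
    Continuous (fun f : X → ℝ => schrodinger b c f x) := by
  have : (fun f : X → ℝ => schrodinger b c f x)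
      = fun f => (∑ y ∈ nbr b hlf x, b x y * (f x - f y)) + c x * f x := by
    funext f
    exact schrodinger_eq_sum b c hb0 hlf f x
  rw [this]
  apply Continuous.add
  · apply continuous_finset_sum
    intro y _
    exact continuous_const.mul ((continuous_apply x).sub (continuous_apply y))
  · exact continuous_const.mul (continuous_apply x)

theorem pset_closed (hb0 : ∀ x y, 0 ≤ b x y) (hlf : ∀ x : X, {y | 0 < b x y}.Finite) :
    IsClosed (Pset b c l x₀) := by
  have : Pset b c l x₀ = (⋂ x, {f : X → ℝ | 0 ≤ f x}) ∩
      ({f : X → ℝ | f x₀ = 1} ∩ ⋂ x, {f : X → ℝ | schrodinger b c f x = l * f x}) := by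
    ext f
    simp only [Set.mem_setOf_eq, Set.mem_inter_iff, Set.mem_iInter]
    exact ⟨fun h => ⟨h.1, h.2.1, h.2.2⟩, fun h => ⟨h.1, h.2.1, h.2.2⟩⟩
  rw [this]
  refine IsClosed.inter (isClosed_iInter fun x => ?_) (IsClosed.inter ?_
    (isClosed_iInter fun x => ?_))
  · exact isClosed_le continuous_const (continuous_apply x)
  · exact isClosed_eq (continuous_apply x₀) continuous_const
  · exact isClosed_eq (continuous_schrod_eval b c hb0 hlf x)
      (continuous_const.mul (continuous_apply x))

theorem pset_compact (hb0 : ∀ x y, 0 ≤ b x y) (hlf : ∀ x : X, {y | 0 < b x y}.Finite)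
    (hconn : Connected b) {C : ℝ} (hC1 : 1 ≤ C)
    (hC : ∀ x w : X, 0 < b x w → kap b c l x w ≤ C) :
    IsCompact (Pset b c l x₀) := by
  classical
  have hsub : Pset b c l x₀ ⊆ Set.pi Set.univ
      (fun x => Set.Icc (0:ℝ) (C ^ (steps_exists b hconn x₀ x).choose)) := by
    intro f hf x _
    refine ⟨hf.1 x, ?_⟩
    have := harnack b c l hb0 hlf hC1 hC (pset_coneM b c l x₀ hf)
      (steps_exists b hconn x₀ x).choose_spec
    rw [hf.2.1, mul_one] at this
    exact this
  exact IsCompact.of_isClosed_subset (isCompact_univ_pi fun x => isCompact_Icc)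
    (pset_closed b c l x₀ hb0 hlf) hsub

theorem extreme_decomp (hb0 : ∀ x y, 0 ≤ b x y) (hlf : ∀ x : X, {y | 0 < b x y}.Finite)
    (hconn : Connected b) {e : X → ℝ}
    (he : e ∈ Set.extremePoints ℝ (Pset b c l x₀))
    {h : X → ℝ} (hh : ConeM b c l h) {M : ℝ} (hM : ∀ x, h x ≤ M * e x) :
    h = fun x => h x₀ * e x := by
  have heP : e ∈ Pset b c l x₀ := he.1
  set s := h x₀ with hs
  have hs0 : 0 ≤ s := hh.1 x₀
  have hsM : s ≤ M := by have := hM x₀; rwa [heP.2.1, mul_one] at this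
  rcases hs0.eq_or_lt with hz | hspos
  · -- s = 0 : h vanishes identically
    funext x
    obtain ⟨n, hst⟩ := steps_exists b hconn x₀ x
    rw [zero_prop b c l hb0 hlf hh hst hz.symm, ← hz, zero_mul]
  rcases hsM.eq_or_lt with hsM' | hsM'
  · -- s = M : M • e - h vanishes identically
    have hφ : ConeM b c l (fun x => M * e x - h x) := by
      constructor
      · intro x
        show 0 ≤ M * e x - h x
        have := hM x; linarith
      · have : (fun x => M * e x - h x) = M • e + (-1 : ℝ) • h := by
          funext x; simp only [Pi.add_apply, Pi.smul_apply, smul_eq_mul]; ring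
        rw [this]
        exact eig_lin b c l hb0 hlf heP.2.2 hh.2 M (-1)
    have hφ0 : M * e x₀ - h x₀ = 0 := by rw [heP.2.1, mul_one, ← hs, ← hsM']; ring
    funext x
    obtain ⟨n, hst⟩ := steps_exists b hconn x₀ x
    have := zero_prop b c l hb0 hlf hφ hst hφ0
    rw [hsM']
    linarith
  · -- 0 < s < M
    have hMpos : 0 < M := lt_trans hspos hsM'
    set u : X → ℝ := s⁻¹ • h with hu
    set w : X → ℝ := (M - s)⁻¹ • (M • e + (-1 : ℝ) • h) with hw
    have hMs : (0:ℝ) < M - s := by linarith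
    have huP : u ∈ Pset b c l x₀ := by
      refine ⟨fun x => ?_, ?_, ?_⟩
      · exact mul_nonneg (inv_nonneg.2 hs0) (hh.1 x)
      · simp only [hu, Pi.smul_apply, smul_eq_mul, ← hs]
        field_simp
      · exact eig_smul b c l hh.2
    have hwP : w ∈ Pset b c l x₀ := by
      refine ⟨fun x => ?_, ?_, ?_⟩
      · have := hM x
        simp only [hw, Pi.smul_apply, Pi.add_apply, smul_eq_mul]
        have h1 : (0:ℝ) ≤ M * e x + (-1) * h x := by linarith
        exact mul_nonneg (inv_nonneg.2 (le_of_lt hMs)) h1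
      · simp only [hw, Pi.smul_apply, Pi.add_apply, smul_eq_mul, heP.2.1, ← hs]
        field_simp
        ring
      · exact eig_smul b c l (eig_lin b c l hb0 hlf heP.2.2 hh.2 M (-1))
    have hseg : e ∈ openSegment ℝ u w := by
      refine ⟨s / M, (M - s) / M, div_pos hspos hMpos, div_pos hMs hMpos, ?_, ?_⟩
      · field_simp; ring
      · funext x
        simp only [hu, hw, Pi.add_apply, Pi.smul_apply, smul_eq_mul]
        field_simp
        ring
    have := he.2 huP hwP hseg
    -- u = e, hence h = s • e
    funext x
    have hx := congrFun this x
    simp only [hu, Pi.smul_apply, smul_eq_mul] at hx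
    rw [← hx]
    field_simp

end Pset
end Aux
namespace Aux
variable {X : Type*} {G : Type*} [Group G] [MulAction G X]

section RelMult
variable (b : X → X → ℝ) (c : X → ℝ) (l : ℝ) (x₀ : X)

theorem rel_mult (hb0 : ∀ x y, 0 ≤ b x y) (hlf : ∀ x : X, {y | 0 < b x y}.Finite)
    (hconn : Connected b)
    (binv : ∀ (g : G) (x y : X), b (g • x) (g • y) = b x y)
    (cinv : ∀ (g : G) (x : X), c (g • x) = c x)
    (V : Finset X) (hV : ∀ x : X, ∃ g : G, ∃ v ∈ V, x = g • v)
    {C : ℝ} (hC1 : 1 ≤ C) (hC : ∀ x w : X, 0 < b x w → kap b c l x w ≤ C)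
    {e : X → ℝ} (he : e ∈ Set.extremePoints ℝ (Pset b c l x₀))
    {N : Subgroup G} (heN : ∀ n ∈ N, ∀ y : X, e (n • y) = e y)
    {g : G} (hgN : ∀ h : G, ⁅g⁻¹, h⁆ ∈ N) :
    shift g e = fun y => e (g⁻¹ • x₀) * e y := by
  have econe : ConeM b c l e := pset_coneM b c l x₀ he.1
  set L : X → ℕ := fun v => (steps_exists b hconn v (g⁻¹ • v)).choose with hL
  set D := V.sup L with hD
  have hbound : ∀ x : X, e (g⁻¹ • x) ≤ C ^ D * e x := by
    intro x
    obtain ⟨h, v, hv, rfl⟩ := hV x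
    have hkey : g⁻¹ • h • v = (⁅g⁻¹, h⁆ : G) • ((h * g⁻¹) • v) := by
      rw [← mul_smul, ← mul_smul]
      congr 1
      simp only [commutatorElement_def]
      group
    have h1 : e (g⁻¹ • h • v) = e ((h * g⁻¹) • v) := by
      rw [hkey, heN _ (hgN h)]
    have hsteps : Steps b (L v) (h • v) ((h * g⁻¹) • v) := by
      have h2 := (steps_exists b hconn v (g⁻¹ • v)).choose_spec
      have h3 := steps_smul b binv h h2
      rwa [← mul_smul] at h3
    calc e (g⁻¹ • h • v) = e ((h * g⁻¹) • v) := h1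
      _ ≤ C ^ (L v) * e (h • v) := harnack b c l hb0 hlf hC1 hC econe hsteps
      _ ≤ C ^ D * e (h • v) := by
          apply mul_le_mul_of_nonneg_right _ (econe.1 _)
          exact pow_le_pow_right₀ hC1 (Finset.le_sup hv)
  have hcone : ConeM b c l (shift g e) :=
    ⟨fun x => econe.1 _, eig_shift b c l binv cinv g econe.2⟩
  exact extreme_decomp b c l x₀ hb0 hlf hconn he hcone (M := C ^ D) hbound

theorem mult_iter {e : X → ℝ} {g : G} {γ : ℝ}
    (hm : shift g e = fun y => γ * e y) (n : ℕ) :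
    shift (g ^ n) e = fun y => γ ^ n * e y := by
  induction n with
  | zero =>
      rw [pow_zero, shift_one]
      funext y; rw [pow_zero, one_mul]
  | succ n ih =>
      have h1 : shift (g ^ (n + 1)) e = shift g (shift (g ^ n) e) := by
        rw [shift_shift, ← pow_succ']
      rw [h1, ih]
      funext y
      show γ ^ n * e (g⁻¹ • y) = γ ^ (n + 1) * e y
      have := congrFun hm y
      simp only [shift] at this
      rw [this, pow_succ]
      ring

theorem mult_pow_eval {e : X → ℝ} {g : G} {γ : ℝ} (he1 : e x₀ = 1)
    (hm : shift g e = fun y => γ * e y) (n : ℕ) :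
    e ((g ^ n)⁻¹ • x₀) = γ ^ n := by
  have := congrFun (mult_iter hm n) x₀
  simp only [shift] at this
  rw [this, he1, mul_one]

theorem km_fix (hb0 : ∀ x y, 0 ≤ b x y) (hlf : ∀ x : X, {y | 0 < b x y}.Finite)
    (hconn : Connected b)
    {C : ℝ} (hC1 : 1 ≤ C) (hC : ∀ x w : X, 0 < b x w → kap b c l x w ≤ C) {g : G}
    (hg : ∀ e ∈ Set.extremePoints ℝ (Pset b c l x₀), shift g e = e)
    {f : X → ℝ} (hf : f ∈ Pset b c l x₀) : shift g f = f := by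
  set F := {u : X → ℝ | u ∈ Pset b c l x₀ ∧ shift g u = u} with hF
  have hFconv : Convex ℝ F := by
    intro u hu w hw a a' ha ha' haa
    refine ⟨pset_convex b c l x₀ hb0 hlf hu.1 hw.1 ha ha' haa, ?_⟩
    funext x
    show (a • u + a' • w) (g⁻¹ • x) = (a • u + a' • w) x
    have hu2 : u (g⁻¹ • x) = u x := congrFun hu.2 x
    have hw2 : w (g⁻¹ • x) = w x := congrFun hw.2 x
    simp only [Pi.add_apply, Pi.smul_apply, smul_eq_mul, hu2, hw2]
  have hFclosed : IsClosed F := by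
    have hFeq : F = Pset b c l x₀ ∩ ⋂ x, {u : X → ℝ | u (g⁻¹ • x) = u x} := by
      ext u
      simp only [hF, Set.mem_setOf_eq, Set.mem_inter_iff, Set.mem_iInter]
      constructor
      · exact fun h => ⟨h.1, fun x => congrFun h.2 x⟩
      · exact fun h => ⟨h.1, funext fun x => h.2 x⟩
    rw [hFeq]
    exact (pset_closed b c l x₀ hb0 hlf).inter
      (isClosed_iInter fun x => isClosed_eq (continuous_apply _) (continuous_apply _))
  have hext : Set.extremePoints ℝ (Pset b c l x₀) ⊆ F := fun e heE => ⟨heE.1, hg e heE⟩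
  have hKM := closure_convexHull_extremePoints
    (pset_compact b c l x₀ hb0 hlf hconn hC1 hC) (pset_convex b c l x₀ hb0 hlf)
  have hsub : Pset b c l x₀ ⊆ F := by
    rw [← hKM]
    exact closure_minimal (le_trans (convexHull_min hext hFconv) (le_refl _)) hFclosed
  exact (hsub hf).2

end RelMult
end Aux
namespace Aux
variable {X : Type*} {G : Type*} [Group G] [MulAction G X]

section CommPow

theorem comm_pow_right {H : Type*} [Group H] (a w : H)
    (hc : ∀ u : H, Commute ⁅a, w⁆ u) (n : ℕ) : ⁅a, w ^ n⁆ = ⁅a, w⁆ ^ n := by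
  induction n with
  | zero => simp
  | succ n ih =>
      have h1 : ⁅a, w ^ (n + 1)⁆ = ⁅a, w ^ n⁆ * (w ^ n * ⁅a, w⁆ * (w ^ n)⁻¹) := by
        simp only [commutatorElement_def, pow_succ]
        group
      have h2 : w ^ n * ⁅a, w⁆ * (w ^ n)⁻¹ = ⁅a, w⁆ := by
        rw [← (hc (w ^ n)).eq]
        group
      rw [h1, h2, ih, pow_succ]

theorem comm_pow_pow {H : Type*} [Group H] (a w : H)
    (hc : ∀ u : H, Commute ⁅a, w⁆ u) (n : ℕ) : ⁅a ^ n, w ^ n⁆ = ⁅a, w⁆ ^ (n * n) := by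
  have hc' : ∀ u : H, Commute (⁅a, w⁆ ^ n) u := fun u => (hc u).pow_left n
  have key : ∀ m : ℕ, ⁅a ^ m, w ^ n⁆ = ⁅a, w⁆ ^ (m * n) := by
    intro m
    induction m with
    | zero => simp
    | succ m ih =>
        have h1 : ⁅a ^ (m + 1), w ^ n⁆
            = (a * ⁅a ^ m, w ^ n⁆ * a⁻¹) * ⁅a, w ^ n⁆ := by
          simp only [commutatorElement_def, pow_succ']
          group
        have h2 : a * ⁅a, w⁆ ^ (m * n) * a⁻¹ = ⁅a, w⁆ ^ (m * n) := by
          rw [← ((hc a).pow_left (m * n)).eq]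
          group
        rw [h1, ih, h2, comm_pow_right a w hc n, ← pow_add]
        congr 1
        ring
  exact key n

end CommPow

section RealLemmas

theorem le_one_of_pow_bounded {γ B : ℝ} (hγ : 0 < γ) (h : ∀ n : ℕ, γ ^ n ≤ B) : γ ≤ 1 := by
  by_contra h1
  push_neg at h1
  obtain ⟨n, hn⟩ := pow_unbounded_of_one_lt B h1
  exact absurd (h n) (not_le.2 hn)

theorem le_one_of_pow_sq {γ C : ℝ} {κ : ℕ} (hγ : 0 < γ) (hC : 1 ≤ C)
    (h : ∀ n : ℕ, γ ^ (n * n) ≤ C ^ (n * κ)) : γ ≤ 1 := by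
  by_contra h1
  push_neg at h1
  have hlog : 0 < Real.log γ := Real.log_pos h1
  have hlogC : 0 ≤ Real.log C := Real.log_nonneg hC
  have key : ∀ n : ℕ, (n : ℝ) * ((n : ℝ) * Real.log γ) ≤ (n : ℝ) * ((κ : ℝ) * Real.log C) := by
    intro n
    have h2 := h n
    have h3 := Real.log_le_log (pow_pos hγ _) h2
    rw [Real.log_pow, Real.log_pow] at h3
    push_cast at h3 ⊢
    nlinarith
  have key2 : ∀ n : ℕ, 1 ≤ n → (n : ℝ) * Real.log γ ≤ (κ : ℝ) * Real.log C := by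
    intro n hn
    have h2 := key n
    have hn' : (0 : ℝ) < n := by exact_mod_cast hn
    exact le_of_mul_le_mul_left h2 hn'
  obtain ⟨n, hn⟩ := exists_nat_gt (((κ : ℝ) * Real.log C) / Real.log γ)
  have hn1 : 1 ≤ n := by
    by_contra hh
    push_neg at hh
    interval_cases n
    simp only [Nat.cast_zero] at hn
    have : 0 ≤ ((κ : ℝ) * Real.log C) / Real.log γ :=
      div_nonneg (mul_nonneg (Nat.cast_nonneg _) hlogC) (le_of_lt hlog)
    linarith
  have := key2 n hn1
  rw [div_lt_iff₀ hlog] at hn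
  linarith

end RealLemmas

section WordSteps
variable (b : X → X → ℝ)

theorem steps_mul_point (binv : ∀ (g : G) (x y : X), b (g • x) (g • y) = b x y)
    {x₀ : X} {p q : ℕ} {u v : G} (hp : Steps b p x₀ (u • x₀)) (hq : Steps b q x₀ (v • x₀)) :
    Steps b (p + q) x₀ ((u * v) • x₀) := by
  have h1 := steps_smul b binv u hq
  rw [← mul_smul] at h1
  exact steps_trans b hp h1

theorem steps_pow_point (binv : ∀ (g : G) (x y : X), b (g • x) (g • y) = b x y)
    {x₀ : X} {p : ℕ} {u : G} (hp : Steps b p x₀ (u • x₀)) (n : ℕ) :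
    Steps b (n * p) x₀ ((u ^ n) • x₀) := by
  induction n with
  | zero =>
      rw [Nat.zero_mul, pow_zero, one_smul]
      rfl
  | succ n ih =>
      have := steps_mul_point b binv ih hp
      rw [← pow_succ] at this
      have harith : n * p + p = (n + 1) * p := by ring
      rwa [harith] at this

end WordSteps
end Aux
namespace Aux
variable {X : Type*} {G : Type*} [Group G] [MulAction G X]

section CommFix
variable (b : X → X → ℝ) (c : X → ℝ) (l : ℝ) (x₀ : X)

theorem comm_gamma_le (hb0 : ∀ x y, 0 ≤ b x y) (hlf : ∀ x : X, {y | 0 < b x y}.Finite)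
    (hconn : Connected b)
    (binv : ∀ (g : G) (x y : X), b (g • x) (g • y) = b x y)
    (cinv : ∀ (g : G) (x : X), c (g • x) = c x)
    (V : Finset X) (hV : ∀ x : X, ∃ g : G, ∃ v ∈ V, x = g • v)
    {C : ℝ} (hC1 : 1 ≤ C) (hC : ∀ x w : X, 0 < b x w → kap b c l x w ≤ C)
    {e : X → ℝ} (he : e ∈ Set.extremePoints ℝ (Pset b c l x₀))
    {N : Subgroup G} [N.Normal] (heN : ∀ n ∈ N, ∀ y : X, e (n • y) = e y)
    (a w : G) (haw : ∀ h : G, ⁅⁅a, w⁆, h⁆ ∈ N) (haw' : ∀ h : G, ⁅⁅w, a⁆, h⁆ ∈ N) :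
    e (⁅a, w⁆⁻¹ • x₀) ≤ 1 := by
  set z := ⁅a, w⁆ with hz
  have hepos : ∀ x, 0 < e x := pset_pos b c l x₀ hb0 hlf hconn he.1
  have hm : shift z e = fun y => e (z⁻¹ • x₀) * e y := by
    refine rel_mult b c l x₀ hb0 hlf hconn binv cinv V hV hC1 hC he heN ?_
    intro h
    rw [hz, commutatorElement_inv]
    exact haw' h
  set γ := e (z⁻¹ • x₀) with hγdef
  have hγpos : 0 < γ := hepos _
  set δ : G → ℕ := fun u => (steps_exists b hconn x₀ (u • x₀)).choose with hδ
  have hδs : ∀ u : G, Steps b (δ u) x₀ (u • x₀) :=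
    fun u => (steps_exists b hconn x₀ (u • x₀)).choose_spec
  apply le_one_of_pow_sq hγpos hC1 (κ := δ w + δ a + δ w⁻¹ + δ a⁻¹)
  intro n
  have heval : e ((z ^ (n * n))⁻¹ • x₀) = γ ^ (n * n) :=
    mult_pow_eval x₀ he.1.2.1 hm (n * n)
  set π := QuotientGroup.mk' N with hπ
  have hcomm : ∀ u : G ⧸ N, Commute ⁅π w, π a⁆ u := by
    intro u
    obtain ⟨u', rfl⟩ := QuotientGroup.mk'_surjective N u
    rw [← commutatorElement_eq_one_iff_commute, ← map_commutatorElement,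
      ← map_commutatorElement]
    exact (QuotientGroup.eq_one_iff _).2 (haw' u')
  have hpow := comm_pow_pow (π w) (π a) hcomm n
  have hmem : (z ^ (n * n))⁻¹ * ⁅w ^ n, a ^ n⁆⁻¹ ∈ N := by
    rw [← QuotientGroup.eq_one_iff]
    show π ((z ^ (n * n))⁻¹ * ⁅w ^ n, a ^ n⁆⁻¹) = 1
    rw [map_mul, map_inv, map_inv, map_pow, map_commutatorElement, map_commutatorElement,
      map_pow, map_pow,
      show ⁅π a, π w⁆ = ⁅π w, π a⁆⁻¹ from (commutatorElement_inv (π w) (π a)).symm,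
      inv_pow, inv_inv, ← hpow]
    exact mul_inv_cancel _
  set q : G := ⁅w ^ n, a ^ n⁆ with hq
  have hzq : (z ^ (n * n))⁻¹ • x₀ = ((z ^ (n * n))⁻¹ * q⁻¹) • (q • x₀) := by
    rw [← mul_smul, mul_assoc, inv_mul_cancel, mul_one]
  have heq2 : e ((z ^ (n * n))⁻¹ • x₀) = e (q • x₀) := by
    rw [hzq, heN _ hmem]
  have s1 := steps_pow_point b binv (hδs w) n
  have s2 := steps_pow_point b binv (hδs a) n
  have s3 := steps_pow_point b binv (hδs w⁻¹) n
  have s4 := steps_pow_point b binv (hδs a⁻¹) n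
  have t2 := steps_mul_point b binv (steps_mul_point b binv (steps_mul_point b binv s1 s2) s3) s4
  have hqeq : w ^ n * a ^ n * (w⁻¹) ^ n * (a⁻¹) ^ n = q := by
    rw [hq, commutatorElement_def, inv_pow, inv_pow]
  rw [hqeq] at t2
  have hbound := harnack b c l hb0 hlf hC1 hC (pset_coneM b c l x₀ he.1) t2
  rw [he.1.2.1, mul_one] at hbound
  have hexp : n * δ w + n * δ a + n * δ w⁻¹ + n * δ a⁻¹
      = n * (δ w + δ a + δ w⁻¹ + δ a⁻¹) := by ring
  rw [hexp] at hbound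
  calc γ ^ (n * n) = e ((z ^ (n * n))⁻¹ • x₀) := heval.symm
    _ = e (q • x₀) := heq2
    _ ≤ _ := hbound

theorem comm_fix_extreme (hb0 : ∀ x y, 0 ≤ b x y) (hlf : ∀ x : X, {y | 0 < b x y}.Finite)
    (hconn : Connected b)
    (binv : ∀ (g : G) (x y : X), b (g • x) (g • y) = b x y)
    (cinv : ∀ (g : G) (x : X), c (g • x) = c x)
    (V : Finset X) (hV : ∀ x : X, ∃ g : G, ∃ v ∈ V, x = g • v)
    {C : ℝ} (hC1 : 1 ≤ C) (hC : ∀ x w : X, 0 < b x w → kap b c l x w ≤ C)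
    {e : X → ℝ} (he : e ∈ Set.extremePoints ℝ (Pset b c l x₀))
    {N : Subgroup G} [N.Normal] (heN : ∀ n ∈ N, ∀ y : X, e (n • y) = e y)
    (a w : G) (haw : ∀ h : G, ⁅⁅a, w⁆, h⁆ ∈ N) (haw' : ∀ h : G, ⁅⁅w, a⁆, h⁆ ∈ N) :
    shift (⁅a, w⁆ : G) e = e := by
  have hepos : ∀ x, 0 < e x := pset_pos b c l x₀ hb0 hlf hconn he.1
  have hm : shift (⁅a, w⁆ : G) e = fun y => e ((⁅a, w⁆ : G)⁻¹ • x₀) * e y := by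
    refine rel_mult b c l x₀ hb0 hlf hconn binv cinv V hV hC1 hC he heN ?_
    intro h
    rw [commutatorElement_inv]
    exact haw' h
  set γ := e ((⁅a, w⁆ : G)⁻¹ • x₀) with hγdef
  have hγ1 : γ ≤ 1 :=
    comm_gamma_le b c l x₀ hb0 hlf hconn binv cinv V hV hC1 hC he heN a w haw haw'
  have hγ'1 : e ((⁅w, a⁆ : G)⁻¹ • x₀) ≤ 1 :=
    comm_gamma_le b c l x₀ hb0 hlf hconn binv cinv V hV hC1 hC he heN w a haw' haw
  rw [commutatorElement_inv] at hγ'1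
  -- γ * e (⁅a,w⁆ • x₀) = 1
  have hprod : γ * e ((⁅a, w⁆ : G) • x₀) = 1 := by
    have h1 := congrFun hm ((⁅a, w⁆ : G) • x₀)
    simp only [shift] at h1
    rw [inv_smul_smul] at h1
    rw [he.1.2.1] at h1
    linarith [h1]
  have hγpos : 0 < γ := hepos _
  have hγ'pos : 0 < e ((⁅a, w⁆ : G) • x₀) := hepos _
  have hγeq : γ = 1 := by nlinarith
  rw [hm]
  funext y
  rw [hγeq, one_mul]

end CommFix
end Aux
namespace Aux
variable {X : Type*} {G : Type*} [Group G] [MulAction G X]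

section StabFix
variable (b : X → X → ℝ) (c : X → ℝ) (l : ℝ) (x₀ : X)

theorem stab_fix_extreme (hb0 : ∀ x y, 0 ≤ b x y) (hlf : ∀ x : X, {y | 0 < b x y}.Finite)
    (hconn : Connected b)
    (binv : ∀ (g : G) (x y : X), b (g • x) (g • y) = b x y)
    (cinv : ∀ (g : G) (x : X), c (g • x) = c x)
    (V : Finset X) (hV : ∀ x : X, ∃ g : G, ∃ v ∈ V, x = g • v)
    {C : ℝ} (hC1 : 1 ≤ C) (hC : ∀ x w : X, 0 < b x w → kap b c l x w ≤ C)
    {e : X → ℝ} (he : e ∈ Set.extremePoints ℝ (Pset b c l x₀))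
    (heN : ∀ n ∈ commutator G, ∀ y : X, e (n • y) = e y)
    {x : X} {s : G} (hs : s ∈ MulAction.stabilizer G x) : shift s e = e := by
  have hepos : ∀ y, 0 < e y := pset_pos b c l x₀ hb0 hlf hconn he.1
  have hhalf : ∀ t : G, t ∈ MulAction.stabilizer G x →
      (shift t e = fun y => e (t⁻¹ • x₀) * e y) ∧ e (t⁻¹ • x₀) ≤ 1 := by
    intro t ht
    have hm : shift t e = fun y => e (t⁻¹ • x₀) * e y := by
      refine rel_mult b c l x₀ hb0 hlf hconn binv cinv V hV hC1 hC he heN ?_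
      intro h
      exact Subgroup.commutator_mem_commutator (Subgroup.mem_top _) (Subgroup.mem_top _)
    refine ⟨hm, ?_⟩
    obtain ⟨p, hp⟩ := steps_exists b hconn x₀ x
    obtain ⟨q, hq⟩ := steps_exists b hconn x x₀
    apply le_one_of_pow_bounded (hepos _) (B := C ^ (p + q))
    intro n
    have heval : e ((t ^ n)⁻¹ • x₀) = (e (t⁻¹ • x₀)) ^ n :=
      mult_pow_eval x₀ he.1.2.1 hm n
    have hfix : (t ^ n)⁻¹ • x = x := by
      have h1 : (t ^ n)⁻¹ ∈ MulAction.stabilizer G x :=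
        Subgroup.inv_mem _ (Subgroup.pow_mem _ ht n)
      exact h1
    have h2 : Steps b q x ((t ^ n)⁻¹ • x₀) := by
      have := steps_smul b binv ((t ^ n)⁻¹) hq
      rwa [hfix] at this
    have h3 : Steps b (p + q) x₀ ((t ^ n)⁻¹ • x₀) := steps_trans b hp h2
    have h4 := harnack b c l hb0 hlf hC1 hC (pset_coneM b c l x₀ he.1) h3
    rw [he.1.2.1, mul_one] at h4
    rw [← heval]
    exact h4
  obtain ⟨hm, hγ1⟩ := hhalf s hs
  obtain ⟨hm', hγ'1⟩ := hhalf s⁻¹ (Subgroup.inv_mem _ hs)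
  rw [inv_inv] at hm' hγ'1
  set γ := e (s⁻¹ • x₀) with hγdef
  have hprod : γ * e (s • x₀) = 1 := by
    have h1 := congrFun hm (s • x₀)
    simp only [shift] at h1
    rw [inv_smul_smul, he.1.2.1] at h1
    linarith [h1]
  have hγpos : 0 < γ := hepos _
  have hγ'pos : 0 < e (s • x₀) := hepos _
  have hγeq : γ = 1 := by nlinarith
  rw [hm]
  funext y
  rw [hγeq, one_mul]

end StabFix
end Aux


/-- There is a normal subgroup `R` containing all stabilisers, under
which all positive generalised eigenfunctions are invariant, with `G/R ≅ ℤ^d`. -/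
theorem exists_normal_subgroup_Zd_quotient {X : Type*} [Countable X] {G : Type*}
    [Group G] [MulAction G X] [Group.IsNilpotent G]
    (b : X → X → ℝ) (c : X → ℝ)
    (hb0 : ∀ x y, 0 ≤ b x y) (hbd : ∀ x, b x x = 0) (hbs : ∀ x, Summable (b x))
    (hlf : ∀ x : X, {y | 0 < b x y}.Finite) (hconn : Connected b)
    (hcocpt : CocompactAction G X)
    (hH : HInvOn b c (Set.univ : Set G)) :
    ∃ R : Subgroup G, R.Normal ∧
      (∀ (l : ℝ) (f : X → ℝ), InDom b f → (schrodinger b c f = fun x => l * f x) →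
        (∀ x, 0 ≤ f x) → f ≠ 0 → ∀ g ∈ R, shift g f = f) ∧
      (∀ x : X, MulAction.stabilizer G x ≤ R) ∧
      (∃ (d : ℕ) (φ : G →* Multiplicative (Fin d → ℤ)),
        Function.Surjective φ ∧ φ.ker = R) := by
  classical
  by_cases hX : Nonempty X
  case neg =>
    haveI : IsEmpty X := not_nonempty_iff.mp hX
    refine ⟨⊤, inferInstance, ?_, fun x => le_top, 0, 1, ?_, ?_⟩
    · intro l f h1 h2 h3 h4 g hg
      exact absurd (funext fun x => isEmptyElim x : f = 0) h4
    · intro y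
      exact ⟨1, Subsingleton.elim _ _⟩
    · ext g
      simp [MonoidHom.mem_ker]
  case pos =>
  obtain ⟨V, hV⟩ := hcocpt
  obtain ⟨xx⟩ := hX
  obtain ⟨g0, v0, hv0, hxeq⟩ := hV xx
  have binv := Aux.b_inv b c hb0 hbd hbs hlf hH
  have cinv := Aux.c_inv b c hb0 hbd hbs hlf hH
  set x₀ := v0 with hx₀
  have hCex : ∀ l : ℝ, ∃ C : ℝ, 1 ≤ C ∧ ∀ x w : X, 0 < b x w → Aux.kap b c l x w ≤ C :=
    fun l => Aux.exists_C b c l hb0 hlf binv cinv V hV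
  choose Cl hCl1 hClb using hCex
  set Efix : G → Prop := fun g => ∀ (l : ℝ) (e : X → ℝ),
    e ∈ Set.extremePoints ℝ (Aux.Pset b c l x₀) → shift g e = e with hEfixdef
  have hEfix_one : Efix 1 := fun l e _ => Aux.shift_one e
  have hEfix_mul : ∀ g h : G, Efix g → Efix h → Efix (g * h) := by
    intro g h hg hh l e he
    rw [← Aux.shift_shift, hh l e he, hg l e he]
  have hEfix_inv : ∀ g : G, Efix g → Efix g⁻¹ := by
    intro g hg l e he
    have h1 := hg l e he
    calc shift g⁻¹ e = shift g⁻¹ (shift g e) := by rw [h1]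
      _ = shift (g⁻¹ * g) e := Aux.shift_shift _ _ _
      _ = e := by rw [inv_mul_cancel, Aux.shift_one]
  set S : Subgroup G :=
    { carrier := {g | Efix g}
      one_mem' := hEfix_one
      mul_mem' := fun ha hb => hEfix_mul _ _ ha hb
      inv_mem' := fun ha => hEfix_inv _ ha } with hSdef
  set Rc : G → Prop := fun g => ∀ (l : ℝ) (f : X → ℝ), InDom b f →
    (schrodinger b c f = fun x => l * f x) → (∀ x, 0 ≤ f x) → f ≠ 0 → shift g f = f
    with hRcdef
  have hRc_one : Rc 1 := fun l f _ _ _ _ => Aux.shift_one f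
  have hRc_mul : ∀ g h : G, Rc g → Rc h → Rc (g * h) := by
    intro g h hg hh l f h1 h2 h3 h4
    rw [← Aux.shift_shift, hh l f h1 h2 h3 h4, hg l f h1 h2 h3 h4]
  have hRc_inv : ∀ g : G, Rc g → Rc g⁻¹ := by
    intro g hg l f h1 h2 h3 h4
    have h5 := hg l f h1 h2 h3 h4
    calc shift g⁻¹ f = shift g⁻¹ (shift g f) := by rw [h5]
      _ = shift (g⁻¹ * g) f := Aux.shift_shift _ _ _
      _ = f := by rw [inv_mul_cancel, Aux.shift_one]
  set R : Subgroup G :=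
    { carrier := {g | Rc g}
      one_mem' := hRc_one
      mul_mem' := fun ha hb => hRc_mul _ _ ha hb
      inv_mem' := fun ha => hRc_inv _ ha } with hRdef
  have hRmem : ∀ g : G, g ∈ R ↔ Rc g := fun g => Iff.rfl
  have hSR : ∀ g : G, Efix g → g ∈ R := by
    intro g hg
    rw [hRmem]
    intro l f hdom heig hpos hne
    have hEig : Aux.Eig b c l f := fun x => congrFun heig x
    have hfx₀ : 0 < f x₀ :=
      Aux.cone_pos b c l hb0 hlf hconn ⟨hpos, hEig⟩ hne x₀
    have hfP : (f x₀)⁻¹ • f ∈ Aux.Pset b c l x₀ := by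
      refine ⟨fun x => mul_nonneg (inv_nonneg.2 hfx₀.le) (hpos x), ?_,
        Aux.eig_smul b c l hEig⟩
      simp only [Pi.smul_apply, smul_eq_mul]
      field_simp
    have hkm := Aux.km_fix b c l x₀ hb0 hlf hconn (hCl1 l) (hClb l)
      (fun e he => hg l e he) hfP
    funext x
    have hx := congrFun hkm x
    simp only [shift, Pi.smul_apply, smul_eq_mul] at hx
    exact mul_left_cancel₀ (inv_ne_zero (ne_of_gt hfx₀)) hx
  have hMain : ∀ z ∈ commutator G, Efix z := by
    have claim : ∀ (m k : ℕ), 1 ≤ k → Group.nilpotencyClass G ≤ k + m →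
        ∀ z ∈ (⊤ : Subgroup G).lowerCentralSeries k, Efix z := by
      intro m
      induction m with
      | zero =>
          intro k _ hclass z hz
          have hbot : (⊤ : Subgroup G).lowerCentralSeries k = ⊥ := by
            rw [eq_bot_iff, ← Subgroup.lowerCentralSeries_nilpotencyClass]
            exact Subgroup.lowerCentralSeries_antitone ⊤ (by simpa using hclass)
          rw [hbot, Subgroup.mem_bot] at hz
          rw [hz]
          exact hEfix_one
      | succ m ih =>
          intro k hk1 hclass z hz
          have hN : ∀ n ∈ (⊤ : Subgroup G).lowerCentralSeries (k + 1), Efix n :=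
            ih (k + 1) (by omega) (by omega)
          obtain ⟨j, rfl⟩ : ∃ j, k = j + 1 := ⟨k - 1, by omega⟩
          have hle : (⊤ : Subgroup G).lowerCentralSeries (j + 1) ≤ S := by
            rw [Subgroup.lowerCentralSeries_succ]
            apply Subgroup.commutator_le.2
            intro u hu g _
            show Efix ⁅u, g⁆
            intro l e he
            have hug : (⁅u, g⁆ : G) ∈ (⊤ : Subgroup G).lowerCentralSeries (j + 1) := by
              rw [Subgroup.lowerCentralSeries_succ]
              exact Subgroup.commutator_mem_commutator hu (Subgroup.mem_top _)
            have hgu : (⁅g, u⁆ : G) ∈ (⊤ : Subgroup G).lowerCentralSeries (j + 1) := by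
              rw [← commutatorElement_inv]
              exact Subgroup.inv_mem _ hug
            refine Aux.comm_fix_extreme b c l x₀ hb0 hlf hconn binv cinv V hV
              (hCl1 l) (hClb l) he (N := (⊤ : Subgroup G).lowerCentralSeries (j + 2)) ?_ u g ?_ ?_
            · intro n hn y
              have h1 := hEfix_inv _ (hN n hn) l e he
              calc e (n • y) = (shift n⁻¹ e) y := by simp [shift]
                _ = e y := by rw [h1]
            · intro h
              show _ ∈ (⊤ : Subgroup G).lowerCentralSeries (j + 1 + 1)
              rw [Subgroup.lowerCentralSeries_succ]
              exact Subgroup.commutator_mem_commutator hug (Subgroup.mem_top _)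
            · intro h
              show _ ∈ (⊤ : Subgroup G).lowerCentralSeries (j + 1 + 1)
              rw [Subgroup.lowerCentralSeries_succ]
              exact Subgroup.commutator_mem_commutator hgu (Subgroup.mem_top _)
          exact hle hz
    intro z hz
    refine claim (Group.nilpotencyClass G) 1 le_rfl (by omega) z ?_
    rw [Subgroup.top_lowerCentralSeries_one]
    exact hz
  have hcommN : ∀ (l : ℝ) (e : X → ℝ), e ∈ Set.extremePoints ℝ (Aux.Pset b c l x₀) →
      ∀ n ∈ commutator G, ∀ y : X, e (n • y) = e y := by
    intro l e he n hn y
    have h1 := hEfix_inv _ (hMain n hn) l e he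
    calc e (n • y) = (shift n⁻¹ e) y := by simp [shift]
      _ = e y := by rw [h1]
  have hcommR : commutator G ≤ R := fun z hz => hSR z (hMain z hz)
  have hRnormal : R.Normal := by
    constructor
    intro n hn g
    have h1 : g * n * g⁻¹ = ⁅g, n⁆ * n := by
      rw [commutatorElement_def]
      group
    rw [h1]
    exact R.mul_mem
      (hcommR (Subgroup.commutator_mem_commutator (Subgroup.mem_top _) (Subgroup.mem_top _)))
      hn
  have hstabE : ∀ (x : X) (s : G), s ∈ MulAction.stabilizer G x → Efix s := by
    intro x s hs l e he
    exact Aux.stab_fix_extreme b c l x₀ hb0 hlf hconn binv cinv V hV (hCl1 l) (hClb l)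
      he (hcommN l e he) hs
  have hstabR : ∀ x : X, MulAction.stabilizer G x ≤ R := fun x s hs => hSR s (hstabE x s hs)
  have htor : ∀ (g : G) (n : ℕ), 1 ≤ n → g ^ n ∈ R → g ∈ R := by
    intro g n hn hgn
    apply hSR
    intro l e he
    have hm : shift g e = fun y => e (g⁻¹ • x₀) * e y := by
      refine Aux.rel_mult b c l x₀ hb0 hlf hconn binv cinv V hV (hCl1 l) (hClb l) he
        (hcommN l e he) ?_
      intro h
      exact Subgroup.commutator_mem_commutator (Subgroup.mem_top _) (Subgroup.mem_top _)
    set γ := e (g⁻¹ • x₀) with hγdef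
    have hγpos : 0 < γ := Aux.pset_pos b c l x₀ hb0 hlf hconn he.1 _
    have hfix : shift (g ^ n) e = e :=
      (hRmem _).1 hgn l e (Aux.inDom_all b hb0 hlf e)
        (funext fun x => he.1.2.2 x) he.1.1 (Aux.pset_ne b c l x₀ he.1)
    have heval : e ((g ^ n)⁻¹ • x₀) = γ ^ n := Aux.mult_pow_eval x₀ he.1.2.1 hm n
    have hone : γ ^ n = 1 := by
      have h1 := congrFun hfix x₀
      simp only [shift] at h1
      rw [he.1.2.1] at h1
      rw [← heval, h1]
    have hγ1 : γ = 1 := by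
      rcases lt_trichotomy γ 1 with h | h | h
      · exfalso
        have h2 := pow_lt_one₀ hγpos.le h (by omega : n ≠ 0)
        rw [hone] at h2
        exact lt_irrefl _ h2
      · exact h
      · exfalso
        have h2 := one_lt_pow₀ h (by omega : n ≠ 0)
        rw [hone] at h2
        exact lt_irrefl _ h2
    rw [hm]
    funext y
    rw [hγ1, one_mul]
  -- finite generation of G ⧸ R
  set π := QuotientGroup.mk' R with hπdef
  set A : Set G := {k | ∃ v ∈ V, ∃ w ∈ V, k • w = v ∨ 0 < b v (k • w)} with hAdef
  have hclosA : Subgroup.closure A = ⊤ := by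
    have claim : ∀ (n : ℕ) (x : X), Aux.Steps b n x₀ x →
        ∃ h ∈ Subgroup.closure A, ∃ v ∈ V, x = h • v := by
      intro n
      induction n with
      | zero =>
          intro x hx
          obtain rfl : x₀ = x := hx
          exact ⟨1, Subgroup.one_mem _, v0, hv0, (one_smul G v0).symm⟩
      | succ n ih =>
          intro y hy
          obtain ⟨z, hz, hedge⟩ := hy
          obtain ⟨h, hhcl, v, hvV, rfl⟩ := ih z hz
          have hb' : 0 < b v (h⁻¹ • y) := by
            have h1 : b (h • v) (h • h⁻¹ • y) = b v (h⁻¹ • y) := binv h v (h⁻¹ • y)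
            rw [smul_inv_smul] at h1
            rw [← h1]
            exact hedge
          obtain ⟨k, w, hwV, hky⟩ := hV (h⁻¹ • y)
          have hkA : k ∈ A := ⟨v, hvV, w, hwV, Or.inr (by rw [← hky]; exact hb')⟩
          refine ⟨h * k, Subgroup.mul_mem _ hhcl (Subgroup.subset_closure hkA), w, hwV, ?_⟩
          rw [mul_smul, ← hky, smul_inv_smul]
    rw [eq_top_iff]
    intro g _
    obtain ⟨n, hs⟩ := Aux.steps_exists b hconn x₀ (g • v0)
    obtain ⟨h, hhcl, v, hvV, heq⟩ := claim n _ hs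
    have hmemA : (h⁻¹ * g) ∈ A :=
      ⟨v, hvV, v0, hv0, Or.inl (by rw [mul_smul, heq, inv_smul_smul])⟩
    have hgeq : g = h * (h⁻¹ * g) := by group
    rw [hgeq]
    exact Subgroup.mul_mem _ hhcl (Subgroup.subset_closure hmemA)
  have hAfin : (π '' A).Finite := by
    set T : Finset (X × X) := V ×ˢ (V ∪ V.biUnion (fun v => Aux.nbr b hlf v)) with hTdef
    have hsub : π '' A ⊆ ⋃ p ∈ (T : Set (X × X)), π '' {k : G | k • p.1 = p.2} := by
      rintro q ⟨k, hk, rfl⟩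
      obtain ⟨v, hvV, w, hwV, hcase⟩ := hk
      rcases hcase with hcase | hcase
      · refine Set.mem_biUnion (x := ((w, v) : X × X)) ?_ ⟨k, hcase, rfl⟩
        exact Finset.mem_coe.2 (Finset.mem_product.2 ⟨hwV, Finset.mem_union_left _ hvV⟩)
      · refine Set.mem_biUnion (x := ((w, k • w) : X × X)) ?_ ⟨k, rfl, rfl⟩
        refine Finset.mem_coe.2 (Finset.mem_product.2 ⟨hwV, Finset.mem_union_right _ ?_⟩)
        exact Finset.mem_biUnion.2 ⟨v, hvV, (Aux.mem_nbr b).2 hcase⟩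
    refine Set.Finite.subset (Set.Finite.biUnion T.finite_toSet ?_) hsub
    intro p _
    apply Set.Subsingleton.finite
    rintro q1 ⟨k1, hk1, rfl⟩ q2 ⟨k2, hk2, rfl⟩
    have hk1' : k1 • p.1 = p.2 := hk1
    have hk2' : k2 • p.1 = p.2 := hk2
    have hst : k1⁻¹ * k2 ∈ MulAction.stabilizer G p.1 := by
      rw [MulAction.mem_stabilizer_iff, mul_smul, hk2', ← hk1', inv_smul_smul]
    have hR2 : k1⁻¹ * k2 ∈ R := hstabR p.1 hst
    show (k1 : G ⧸ R) = (k2 : G ⧸ R)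
    exact QuotientGroup.eq.2 hR2
  have hFG : Group.FG (G ⧸ R) := by
    rw [Group.fg_iff]
    refine ⟨π '' A, ?_, hAfin⟩
    rw [← MonoidHom.map_closure, hclosA, ← MonoidHom.range_eq_map]
    exact MonoidHom.range_eq_top_of_surjective π (QuotientGroup.mk'_surjective R)
  have hcommQ : ∀ q r : G ⧸ R, q * r = r * q := by
    intro q r
    obtain ⟨a', rfl⟩ := QuotientGroup.mk'_surjective R q
    obtain ⟨b', rfl⟩ := QuotientGroup.mk'_surjective R r
    show ((a' * b' : G) : G ⧸ R) = ((b' * a' : G) : G ⧸ R)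
    rw [QuotientGroup.eq]
    have hco : (a' * b')⁻¹ * (b' * a') = ⁅b'⁻¹, a'⁻¹⁆ := by
      rw [commutatorElement_def]
      group
    rw [hco]
    exact hcommR (Subgroup.commutator_mem_commutator (Subgroup.mem_top _) (Subgroup.mem_top _))
  letI : CommGroup (G ⧸ R) := { (inferInstance : Group (G ⧸ R)) with mul_comm := hcommQ }
  haveI hafg : AddGroup.FG (Additive (G ⧸ R)) := GroupFG.iff_add_fg.mp hFG
  haveI : Module.Finite ℤ (Additive (G ⧸ R)) := Module.Finite.iff_addGroup_fg.mpr hafg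
  haveI : NoZeroSMulDivisors ℤ (Additive (G ⧸ R)) := by
    refine ⟨fun {n x} hnx => ?_⟩
    by_cases hn : n = 0
    · exact Or.inl hn
    · right
      obtain ⟨g, hg⟩ := QuotientGroup.mk'_surjective R (Additive.toMul x)
      have hx1 : Additive.toMul x ^ n = 1 := by
        rw [← toMul_zsmul, hnx]
        rfl
      have hq1 : ((g ^ n : G) : G ⧸ R) = 1 := by
        rw [QuotientGroup.mk_zpow]
        show ((g : G ⧸ R)) ^ n = 1
        rw [show ((g : G ⧸ R)) = Additive.toMul x from hg, hx1]
      have hgn : g ^ n ∈ R := (QuotientGroup.eq_one_iff _).1 hq1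
      have hgnat : g ^ n.natAbs ∈ R := by
        rcases Int.natAbs_eq n with hh | hh
        · rw [hh, zpow_natCast] at hgn
          exact hgn
        · rw [hh, zpow_neg, zpow_natCast] at hgn
          exact (Subgroup.inv_mem_iff R).1 hgn
      have hgR : g ∈ R := htor g n.natAbs (by
        have := Int.natAbs_pos.mpr hn
        omega) hgnat
      have hx0 : Additive.toMul x = 1 := by
        rw [← hg]
        exact (QuotientGroup.eq_one_iff g).2 hgR
      exact toMul_eq_one.1 hx0
  haveI : Module.Free ℤ (Additive (G ⧸ R)) := Module.free_of_finite_type_torsion_free'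
  set d := Fintype.card (Module.Free.ChooseBasisIndex ℤ (Additive (G ⧸ R))) with hd
  set B := (Module.Free.chooseBasis ℤ (Additive (G ⧸ R))).reindex
    (Fintype.equivFin (Module.Free.ChooseBasisIndex ℤ (Additive (G ⧸ R)))) with hB
  set E := B.equivFun with hE
  set ψ : (G ⧸ R) →* Multiplicative (Fin d → ℤ) :=
    { toFun := fun q => Multiplicative.ofAdd (E (Additive.ofMul q))
      map_one' := by simp
      map_mul' := by
        intro q r
        simp [ofMul_mul] } with hψ
  refine ⟨R, hRnormal, ?_, hstabR, d, ψ.comp π, ?_, ?_⟩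
  · intro l f h1 h2 h3 h4 g hg
    exact (hRmem g).1 hg l f h1 h2 h3 h4
  · intro y
    obtain ⟨g, hg⟩ := QuotientGroup.mk'_surjective R
      (Additive.toMul (E.symm (Multiplicative.toAdd y)))
    refine ⟨g, ?_⟩
    show Multiplicative.ofAdd (E (Additive.ofMul (π g))) = y
    rw [show (π g : G ⧸ R) = Additive.toMul (E.symm (Multiplicative.toAdd y)) from hg]
    rw [ofMul_toMul, LinearEquiv.apply_symm_apply, ofAdd_toAdd]
  · ext g
    rw [MonoidHom.mem_ker]
    show Multiplicative.ofAdd (E (Additive.ofMul (π g))) = 1 ↔ g ∈ R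
    rw [ofAdd_eq_one, LinearEquiv.map_eq_zero_iff, ofMul_eq_zero]
    exact QuotientGroup.eq_one_iff g

end GraphPaper
end
end

section
/- Let (b,c) be a locally finite connected graph over X with a free and cocompact action of ℤ^d on X such that b and c are ℤ^d-invariant, and fix x₀ ∈ X. Let α₁ ≠ α₂ ∈ ℝ^d and t ∈ (0,1), and suppose that for i = 1, 2 there is a strictly positive λᵢ-harmonic function fᵢ in the domain of H_{b,c} with fᵢ(x₀) = 1 and fᵢ(z·x) = exp(⟨αᵢ, z⟩) fᵢ(x) for all z ∈ ℤ^d, x ∈ X, and that there is a strictly positive λ-harmonic function f in the domain of H_{b,c} with f(x₀) = 1 and f(z·x) = exp(⟨tα₁ + (1−t)α₂, z⟩) f(x) for all z ∈ ℤ^d, x ∈ X. Then λ > tλ₁ + (1−t)λ₂; that is, the map assigning to each character exponent α its generalised eigenvalue is strictly concave. -/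
open MeasureTheory
open scoped BigOperators

noncomputable section

namespace GraphPaper

variable {X : Type*}

variable {G : Type*} [Group G] [MulAction G X]

lemma amgm_lt {t a c : ℝ} (ht0 : 0 < t) (ht1 : t < 1) (ha : 0 < a) (hc : 0 < c)
    (hne : a ≠ c) : a ^ t * c ^ (1 - t) < t * a + (1 - t) * c := by
  have h1t : (0:ℝ) < 1 - t := by linarith
  have h := strictConcaveOn_log_Ioi.2 (Set.mem_Ioi.mpr ha) (Set.mem_Ioi.mpr hc) hne ht0
    h1t (show t + (1 - t) = 1 by ring)
  have h2 : t * Real.log a + (1 - t) * Real.log c < Real.log (t * a + (1 - t) * c) := by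
    simpa [smul_eq_mul] using h
  have hpos : 0 < t * a + (1 - t) * c := add_pos (mul_pos ht0 ha) (mul_pos h1t hc)
  calc a ^ t * c ^ (1 - t)
      = Real.exp (t * Real.log a + (1 - t) * Real.log c) := by
        rw [Real.rpow_def_of_pos ha, Real.rpow_def_of_pos hc, ← Real.exp_add]
        ring_nf
    _ < Real.exp (Real.log (t * a + (1 - t) * c)) := Real.exp_lt_exp.mpr h2
    _ = t * a + (1 - t) * c := Real.exp_log hpos

lemma amgm_le {t a c : ℝ} (ht0 : 0 < t) (ht1 : t < 1) (ha : 0 < a) (hc : 0 < c) :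
    a ^ t * c ^ (1 - t) ≤ t * a + (1 - t) * c := by
  rcases eq_or_ne a c with rfl | hne
  · rw [← Real.rpow_add ha]
    norm_num
    linarith
  · exact (amgm_lt ht0 ht1 ha hc hne).le

/-- The eigenvalue as a function of the character exponent is strictly
concave. -/
theorem eigenvalue_strictly_concave {X : Type*} [Countable X] {d : ℕ}
    [AddAction (Fin d → ℤ) X]
    (b : X → X → ℝ) (c : X → ℝ)
    (hb0 : ∀ x y, 0 ≤ b x y) (hbd : ∀ x, b x x = 0) (hbs : ∀ x, Summable (b x))
    (hlf : ∀ x : X, {y | 0 < b x y}.Finite) (hconn : Connected b)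
    (hfree : ∀ (z : Fin d → ℤ) (x : X), z +ᵥ x = x → z = 0)
    (hcocpt : ∃ V : Finset X, ∀ x : X, ∃ z : Fin d → ℤ, ∃ v ∈ V, x = z +ᵥ v)
    (hbinv : ∀ (z : Fin d → ℤ) (x y : X), b (z +ᵥ x) (z +ᵥ y) = b x y)
    (hcinv : ∀ (z : Fin d → ℤ) (x : X), c (z +ᵥ x) = c x)
    (x₀ : X) (α₁ α₂ : Fin d → ℝ) (hα : α₁ ≠ α₂) (t : ℝ) (ht0 : 0 < t) (ht1 : t < 1)
    (l₁ l₂ l : ℝ) (f₁ f₂ f : X → ℝ)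
    (hdom₁ : InDom b f₁) (hpos₁ : ∀ x, 0 < f₁ x) (hn₁ : f₁ x₀ = 1)
    (hharm₁ : schrodinger b c f₁ = fun x => l₁ * f₁ x)
    (hmul₁ : ∀ (z : Fin d → ℤ) (x : X),
      f₁ (z +ᵥ x) = Real.exp (∑ k, α₁ k * (z k : ℝ)) * f₁ x)
    (hdom₂ : InDom b f₂) (hpos₂ : ∀ x, 0 < f₂ x) (hn₂ : f₂ x₀ = 1)
    (hharm₂ : schrodinger b c f₂ = fun x => l₂ * f₂ x)
    (hmul₂ : ∀ (z : Fin d → ℤ) (x : X),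
      f₂ (z +ᵥ x) = Real.exp (∑ k, α₂ k * (z k : ℝ)) * f₂ x)
    (hdom : InDom b f) (hpos : ∀ x, 0 < f x) (hn : f x₀ = 1)
    (hharm : schrodinger b c f = fun x => l * f x)
    (hmul : ∀ (z : Fin d → ℤ) (x : X),
      f (z +ᵥ x) = Real.exp (∑ k, (t * α₁ k + (1 - t) * α₂ k) * (z k : ℝ)) * f x) :
    t * l₁ + (1 - t) * l₂ < l := by
  classical
  have h1t : (0:ℝ) < 1 - t := by linarith
  set lam : ℝ := t * l₁ + (1 - t) * l₂ with hlam
  set g : X → ℝ := fun x => f₁ x ^ t * f₂ x ^ (1 - t) with hgdef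
  have hgpos : ∀ x, 0 < g x := fun x =>
    mul_pos (Real.rpow_pos_of_pos (hpos₁ x) t) (Real.rpow_pos_of_pos (hpos₂ x) (1 - t))
  set u : X → ℝ := fun x => g x / f x with hudef
  have hupos : ∀ x, 0 < u x := fun x => div_pos (hgpos x) (hpos x)
  have hgu : ∀ x, u x * f x = g x := fun x => div_mul_cancel₀ _ (hpos x).ne'
  -- invariance of u under the action
  have hginv : ∀ (z : Fin d → ℤ) (x : X),
      g (z +ᵥ x) = Real.exp (∑ k, (t * α₁ k + (1 - t) * α₂ k) * (z k : ℝ)) * g x := by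
    intro z x
    have e1 : ∑ k, (t * α₁ k + (1 - t) * α₂ k) * (z k : ℝ)
        = t * (∑ k, α₁ k * (z k : ℝ)) + (1 - t) * (∑ k, α₂ k * (z k : ℝ)) := by
      rw [Finset.mul_sum, Finset.mul_sum, ← Finset.sum_add_distrib]
      exact Finset.sum_congr rfl fun k _ => by ring
    show f₁ (z +ᵥ x) ^ t * f₂ (z +ᵥ x) ^ (1 - t) = _
    rw [hmul₁ z x, hmul₂ z x,
        Real.mul_rpow (Real.exp_nonneg _) (hpos₁ x).le,
        Real.mul_rpow (Real.exp_nonneg _) (hpos₂ x).le,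
        ← Real.exp_mul, ← Real.exp_mul, e1, Real.exp_add]
    show _ = Real.exp (t * _) * Real.exp ((1 - t) * _) * (f₁ x ^ t * f₂ x ^ (1 - t))
    ring_nf
  have huinv : ∀ (z : Fin d → ℤ) (x : X), u (z +ᵥ x) = u x := by
    intro z x
    show g (z +ᵥ x) / f (z +ᵥ x) = g x / f x
    rw [hginv z x, hmul z x, mul_div_mul_left _ _ (Real.exp_ne_zero _)]
  -- minimizer of u
  obtain ⟨V, hV⟩ := hcocpt
  obtain ⟨z₀, v₀, hv₀, hx₀⟩ := hV x₀
  obtain ⟨w, hwV, hwmin⟩ := V.exists_min_image u ⟨v₀, hv₀⟩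
  have hmin : ∀ x, u w ≤ u x := by
    intro x
    obtain ⟨z, v, hv, rfl⟩ := hV x
    rw [huinv]
    exact hwmin v hv
  -- summability
  have hsf : ∀ x, Summable fun y => b x y * f y := fun x =>
    (hdom x).congr fun y => by rw [abs_of_pos (hpos y)]
  have hsf₁ : ∀ x, Summable fun y => b x y * f₁ y := fun x =>
    (hdom₁ x).congr fun y => by rw [abs_of_pos (hpos₁ y)]
  have hsf₂ : ∀ x, Summable fun y => b x y * f₂ y := fun x =>
    (hdom₂ x).congr fun y => by rw [abs_of_pos (hpos₂ y)]
  -- eigen identity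
  have key : ∀ (F : X → ℝ) (lF : ℝ),
      (∀ x, Summable fun y => b x y * F y) →
      schrodinger b c F = (fun x => lF * F x) →
      ∀ x, ∑' y, b x y * F y = ((∑' y, b x y) + c x - lF) * F x := by
    intro F lF hFs hFh x
    have h0 : (∑' y, b x y * (F x - F y)) + c x * F x = lF * F x := congrFun hFh x
    have h2 : Summable fun y => b x y * F x := (hbs x).mul_right (F x)
    have h3 : ∑' y, b x y * (F x - F y) = (∑' y, b x y) * F x - ∑' y, b x y * F y := by
      rw [show (fun y => b x y * (F x - F y)) = fun y => b x y * F x - b x y * F y from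
        funext fun y => by ring, Summable.tsum_sub h2 (hFs x), tsum_mul_right]
    rw [h3] at h0
    linear_combination -h0
  -- the geometric mean identity
  have hgy : ∀ x y, g y = g x * ((f₁ y / f₁ x) ^ t * (f₂ y / f₂ x) ^ (1 - t)) := by
    intro x y
    have e₁ : f₁ x * (f₁ y / f₁ x) = f₁ y := by
      rw [mul_comm, div_mul_cancel₀ _ (hpos₁ x).ne']
    have e₂ : f₂ x * (f₂ y / f₂ x) = f₂ y := by
      rw [mul_comm, div_mul_cancel₀ _ (hpos₂ x).ne']
    have : g x * ((f₁ y / f₁ x) ^ t * (f₂ y / f₂ x) ^ (1 - t))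
        = (f₁ x * (f₁ y / f₁ x)) ^ t * (f₂ x * (f₂ y / f₂ x)) ^ (1 - t) := by
      rw [Real.mul_rpow (hpos₁ x).le (div_pos (hpos₁ y) (hpos₁ x)).le,
          Real.mul_rpow (hpos₂ x).le (div_pos (hpos₂ y) (hpos₂ x)).le]
      show f₁ x ^ t * f₂ x ^ (1 - t) * _ = _
      ring
    rw [this, e₁, e₂]
  -- pointwise AM-GM bound
  have hptle : ∀ x y, b x y * g y ≤
      (g x * t / f₁ x) * (b x y * f₁ y) + (g x * (1 - t) / f₂ x) * (b x y * f₂ y) := by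
    intro x y
    have ha : 0 < f₁ y / f₁ x := div_pos (hpos₁ y) (hpos₁ x)
    have hc : 0 < f₂ y / f₂ x := div_pos (hpos₂ y) (hpos₂ x)
    have h' : g y ≤ g x * (t * (f₁ y / f₁ x) + (1 - t) * (f₂ y / f₂ x)) := by
      rw [hgy x y]
      exact mul_le_mul_of_nonneg_left (amgm_le ht0 ht1 ha hc) (hgpos x).le
    calc b x y * g y
        ≤ b x y * (g x * (t * (f₁ y / f₁ x) + (1 - t) * (f₂ y / f₂ x))) :=
          mul_le_mul_of_nonneg_left h' (hb0 x y)
      _ = (g x * t / f₁ x) * (b x y * f₁ y) + (g x * (1 - t) / f₂ x) * (b x y * f₂ y) := by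
          field_simp
  have hMs : ∀ x, Summable fun y =>
      (g x * t / f₁ x) * (b x y * f₁ y) + (g x * (1 - t) / f₂ x) * (b x y * f₂ y) :=
    fun x => ((hsf₁ x).mul_left _).add ((hsf₂ x).mul_left _)
  have hSg : ∀ x, Summable fun y => b x y * g y := fun x =>
    Summable.of_nonneg_of_le (fun y => mul_nonneg (hb0 x y) (hgpos y).le) (hptle x) (hMs x)
  have hMsum : ∀ x, ∑' y, ((g x * t / f₁ x) * (b x y * f₁ y) +
      (g x * (1 - t) / f₂ x) * (b x y * f₂ y)) = ((∑' y, b x y) + c x - lam) * g x := by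
    intro x
    rw [Summable.tsum_add ((hsf₁ x).mul_left _) ((hsf₂ x).mul_left _), tsum_mul_left, tsum_mul_left,
        key f₁ l₁ hsf₁ hharm₁ x, key f₂ l₂ hsf₂ hharm₂ x, hlam]
    field_simp [(hpos₁ x).ne', (hpos₂ x).ne']
    ring
  -- lower equality at any point
  have hsl : ∀ x, Summable fun y => b x y * (u x * f y) := fun x =>
    ((hsf x).mul_left (u x)).congr fun y => by ring
  have hlowEq : ∀ x, ∑' y, b x y * (u x * f y) = ((∑' y, b x y) + c x - l) * g x := by
    intro x
    calc ∑' y, b x y * (u x * f y) = ∑' y, u x * (b x y * f y) := by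
          exact tsum_congr fun y => by ring
      _ = u x * ∑' y, b x y * f y := tsum_mul_left
      _ = u x * (((∑' y, b x y) + c x - l) * f x) := by rw [key f l hsf hharm x]
      _ = ((∑' y, b x y) + c x - l) * (u x * f x) := by ring
      _ = ((∑' y, b x y) + c x - l) * g x := by rw [hgu x]
  -- termwise bound at a minimizer
  have hptlow : ∀ x, (∀ y, u x ≤ u y) → ∀ y, b x y * (u x * f y) ≤ b x y * g y := by
    intro x hx y
    refine mul_le_mul_of_nonneg_left ?_ (hb0 x y)
    calc u x * f y ≤ u y * f y := mul_le_mul_of_nonneg_right (hx y) (hpos y).le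
      _ = g y := hgu y
  -- non-strict inequality
  have hle : lam ≤ l := by
    have h1 : ((∑' y, b w y) + c w - l) * g w ≤ ∑' y, b w y * g y := by
      rw [← hlowEq w]
      exact Summable.tsum_le_tsum (hptlow w hmin) (hsl w) (hSg w)
    have h2 : (∑' y, b w y * g y) ≤ ((∑' y, b w y) + c w - lam) * g w := by
      rw [← hMsum w]
      exact Summable.tsum_le_tsum (hptle w) (hSg w) (hMs w)
    have h3 := le_trans h1 h2
    nlinarith [hgpos w]
  by_contra hcon
  push_neg at hcon
  have hll : l = lam := le_antisymm hcon hle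
  -- at any minimizer, neighbors are minimizers and ratios agree
  have hstep : ∀ x, (∀ y, u x ≤ u y) →
      (∀ y, 0 < b x y → (∀ y', u y ≤ u y')) ∧
      (∀ y, 0 < b x y → f₁ y * f₂ x = f₂ y * f₁ x) := by
    intro x hx
    have hEq1 : ∑' y, b x y * (u x * f y) = ∑' y, b x y * g y := by
      have h1 : ∑' y, b x y * (u x * f y) ≤ ∑' y, b x y * g y :=
        Summable.tsum_le_tsum (hptlow x hx) (hsl x) (hSg x)
      have h2 : (∑' y, b x y * g y) ≤ ((∑' y, b x y) + c x - lam) * g x := by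
        rw [← hMsum x]
        exact Summable.tsum_le_tsum (hptle x) (hSg x) (hMs x)
      have h3 := hlowEq x
      rw [hll] at h3
      linarith
    have hEq2 : (∑' y, b x y * g y) = ((∑' y, b x y) + c x - lam) * g x := by
      have h1 : ∑' y, b x y * (u x * f y) ≤ ∑' y, b x y * g y :=
        Summable.tsum_le_tsum (hptlow x hx) (hsl x) (hSg x)
      have h2 : (∑' y, b x y * g y) ≤ ((∑' y, b x y) + c x - lam) * g x := by
        rw [← hMsum x]
        exact Summable.tsum_le_tsum (hptle x) (hSg x) (hMs x)
      have h3 := hlowEq x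
      rw [hll] at h3
      linarith
    constructor
    · intro y hy y'
      by_contra hcon2
      push_neg at hcon2
      have huy : u x < u y := by
        rcases lt_or_eq_of_le (hx y) with h | h
        · exact h
        · exact absurd (h ▸ hx y') (not_le.mpr hcon2)
      have hstrict : b x y * (u x * f y) < b x y * g y := by
        refine mul_lt_mul_of_pos_left ?_ hy
        calc u x * f y < u y * f y := mul_lt_mul_of_pos_right huy (hpos y)
          _ = g y := hgu y
      exact absurd hEq1 (ne_of_lt (Summable.tsum_lt_tsum (hptlow x hx) hstrict (hsl x) (hSg x)))
    · intro y hy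
      by_contra hne
      have hane : f₁ y / f₁ x ≠ f₂ y / f₂ x := fun h =>
        hne ((div_eq_div_iff (hpos₁ x).ne' (hpos₂ x).ne').mp h)
      have hstrict : b x y * g y <
          (g x * t / f₁ x) * (b x y * f₁ y) + (g x * (1 - t) / f₂ x) * (b x y * f₂ y) := by
        have ha : 0 < f₁ y / f₁ x := div_pos (hpos₁ y) (hpos₁ x)
        have hc : 0 < f₂ y / f₂ x := div_pos (hpos₂ y) (hpos₂ x)
        have h' : g y < g x * (t * (f₁ y / f₁ x) + (1 - t) * (f₂ y / f₂ x)) := by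
          rw [hgy x y]
          exact mul_lt_mul_of_pos_left (amgm_lt ht0 ht1 ha hc hane) (hgpos x)
        calc b x y * g y
            < b x y * (g x * (t * (f₁ y / f₁ x) + (1 - t) * (f₂ y / f₂ x))) :=
              mul_lt_mul_of_pos_left h' hy
          _ = (g x * t / f₁ x) * (b x y * f₁ y) + (g x * (1 - t) / f₂ x) * (b x y * f₂ y) := by
              field_simp
      rw [← hMsum x] at hEq2
      exact absurd hEq2 (ne_of_lt (Summable.tsum_lt_tsum (hptle x) hstrict (hSg x) (hMs x)))
  -- every point is a minimizer
  have hall : ∀ x, ∀ y, u x ≤ u y := by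
    intro x
    induction hconn w x with
    | refl => exact hmin
    | tail hab hbc ih => exact (hstep _ ih).1 _ hbc
  have hratio : ∀ x y, 0 < b x y → f₁ y * f₂ x = f₂ y * f₁ x :=
    fun x y h => (hstep x (hall x)).2 y h
  have hconst : ∀ x, f₁ x = f₂ x := by
    intro x
    induction hconn x₀ x with
    | refl => rw [hn₁, hn₂]
    | @tail p q hp hpq ih =>
      have h := hratio p q hpq
      rw [ih] at h
      exact mul_right_cancel₀ (hpos₂ p).ne' h
  -- contradiction with α₁ ≠ α₂
  obtain ⟨k, hk⟩ := Function.ne_iff.mp hα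
  set z : Fin d → ℤ := fun j => if j = k then 1 else 0 with hz
  have hsum : ∀ (α : Fin d → ℝ), ∑ j, α j * ((z j : ℤ) : ℝ) = α k := by
    intro α
    rw [hz]
    simp
  have h1 := hmul₁ z x₀
  rw [hsum α₁, hn₁, mul_one] at h1
  have h2 := hmul₂ z x₀
  rw [hsum α₂, hn₂, mul_one] at h2
  have h3 := hconst (z +ᵥ x₀)
  rw [h1, h2] at h3
  exact hk (Real.exp_eq_exp.mp h3)

end GraphPaper
end
end
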